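/- arXiv:1701.05674 — 10 statements merged into one kernel-verified Lean document; each statement's English description precedes it below -/
import Mathlib

section
/- Let 0 < β ≤ α and let â = (â[i₁], …, â[i_m]) be an α-RS with all entries strictly positive. Let θ be a real number with θ ≥ â[i₁], and let v be the largest index with â[i_v] ≤ θ. Then either v equals the largest index w with â[i_w] ≤ (1+β)^⌈log_{1+β} θ⌉, or v equals the largest index w with â[i_w] ≤ (1+β)^⌊log_{1+β} θ⌋. -/
/-- Let `0 < β ≤ α` and let `a` (positions `0, …, m-1`) be an `α`-RS with all
entries strictly positive.  Let `θ ≥ a 0`, and let `v` be the largest position with `a v ≤ θ`.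
Then `v` is the largest position `w` with `a w ≤ (1+β)^⌈log_{1+β} θ⌉`, or `v` is the largest
position `w` with `a w ≤ (1+β)^⌊log_{1+β} θ⌋`. -/
theorem stmt1 (α β : ℝ) (hβ : 0 < β) (hβα : β ≤ α)
    (m : ℕ) (hm : 0 < m) (a : ℕ → ℝ)
    (hpos : ∀ i, i < m → 0 < a i)
    (hRS : ∀ i, i + 1 < m → (1 + α) * a i ≤ a (i + 1))
    (θ : ℝ) (hθ : a 0 ≤ θ)
    (v : ℕ) (hv : v < m) (hva : a v ≤ θ)
    (hvmax : ∀ w, w < m → a w ≤ θ → w ≤ v) :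
    (a v ≤ (1 + β) ^ ⌈Real.logb (1 + β) θ⌉ ∧
      ∀ w, w < m → a w ≤ (1 + β) ^ ⌈Real.logb (1 + β) θ⌉ → w ≤ v) ∨
    (a v ≤ (1 + β) ^ ⌊Real.logb (1 + β) θ⌋ ∧
      ∀ w, w < m → a w ≤ (1 + β) ^ ⌊Real.logb (1 + β) θ⌋ → w ≤ v) := by
  have hb : (1:ℝ) < 1 + β := by linarith
  have hb0 : (0:ℝ) < 1 + β := by linarith
  have hθpos : 0 < θ := lt_of_lt_of_le (hpos 0 hm) hθ
  set x := Real.logb (1 + β) θ with hx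
  set L : ℝ := (1 + β) ^ ⌊x⌋ with hL
  set U : ℝ := (1 + β) ^ ⌈x⌉ with hU
  have hrpow : ∀ n : ℤ, (1 + β) ^ n = (1 + β) ^ ((n : ℝ)) := fun n =>
    (Real.rpow_intCast (1 + β) n).symm
  have hbx : (1 + β) ^ (x : ℝ) = θ := Real.rpow_logb hb0 (ne_of_gt hb) hθpos
  have hLθ : L ≤ θ := by
    rw [hL, hrpow, ← hbx]
    exact Real.rpow_le_rpow_of_exponent_le (le_of_lt hb) (Int.floor_le x)
  have hθU : θ ≤ U := by
    rw [hU, hrpow, ← hbx]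
    exact Real.rpow_le_rpow_of_exponent_le (le_of_lt hb) (Int.le_ceil x)
  have hUL : U ≤ (1 + β) * L := by
    rw [hU, hL]
    calc (1 + β) ^ ⌈x⌉ ≤ (1 + β) ^ (⌊x⌋ + 1) :=
          zpow_le_zpow_right₀ (le_of_lt hb) (by
            have := Int.ceil_le_floor_add_one x; omega)
      _ = (1 + β) * (1 + β) ^ ⌊x⌋ := by rw [zpow_add_one₀ (ne_of_gt hb0)]; ring
  have hmono : ∀ i j, i ≤ j → j < m → a i ≤ a j := by
    intro i j hij hjm
    induction j with
    | zero => rw [Nat.le_zero.mp hij]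
    | succ k ih =>
      rcases Nat.eq_or_lt_of_le hij with h | h
      · rw [h]
      · have hik : i ≤ k := Nat.lt_succ_iff.mp h
        have hkm : k < m := Nat.lt_of_succ_lt hjm
        refine (ih hik hkm).trans ?_
        have h1 := hRS k hjm
        nlinarith [hpos k hkm]
  by_cases hcase : a v ≤ L
  · exact Or.inr ⟨hcase, fun w hw hwL => hvmax w hw (hwL.trans hLθ)⟩
  · refine Or.inl ⟨hva.trans hθU, fun w hw hwU => ?_⟩
    by_contra hvw
    push_neg at hvw
    have hv1w : v + 1 ≤ w := hvw
    have haw : a (v + 1) ≤ a w := hmono (v + 1) w hv1w hw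
    have h1 := hRS v (lt_of_le_of_lt hv1w hw)
    have hvposa := hpos v hv
    push_neg at hcase
    have : (1 + β) * L < a w := by nlinarith
    linarith
end

section
/- For every nondecreasing array A = (a[0], a[1], …, a[n]) of nonnegative reals and every β > 0, there exist indices 0 ≤ i₁ < i₂ < ⋯ < i_m = n such that (a[i₁], …, a[i_m]) is a β-RS and its completion A' = (a'[0], …, a'[n]) satisfies a[t] ≤ a'[t] ≤ (1+β)·a[t] for all 0 ≤ t ≤ n. -/
/-- For every nondecreasing array `a[0..n]` of nonnegative reals and every `β > 0`,
there exist indices `idx 0 < idx 1 < ⋯ < idx (m-1) = n` such that the subsequence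
`a (idx 0), …, a (idx (m-1))` is a `β`-RS, and its completion `A'` satisfies
`a t ≤ A' t ≤ (1+β) * a t` for all `0 ≤ t ≤ n`. -/
theorem stmt2 (n : ℕ) (a : ℕ → ℝ)
    (hmono : ∀ t, t + 1 ≤ n → a t ≤ a (t + 1))
    (hnonneg : ∀ t, t ≤ n → 0 ≤ a t)
    (β : ℝ) (hβ : 0 < β) :
    ∃ (m : ℕ) (idx : ℕ → ℕ) (A' : ℕ → ℝ),
      0 < m ∧
      (∀ v, v + 1 < m → idx v < idx (v + 1)) ∧
      idx (m - 1) = n ∧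
      (∀ v, v + 1 < m → (1 + β) * a (idx v) ≤ a (idx (v + 1)) ∧ 0 ≤ (1 + β) * a (idx v)) ∧
      (∀ t, t ≤ idx 0 → A' t = a (idx 0)) ∧
      (∀ v, v + 1 < m → ∀ t, idx v < t → t ≤ idx (v + 1) → A' t = a (idx (v + 1))) ∧
      (∀ t, t ≤ n → a t ≤ A' t ∧ A' t ≤ (1 + β) * a t) := by
  classical
  -- general monotonicity
  have amono : ∀ s, s ≤ n → ∀ t, t ≤ s → a t ≤ a s := by
    intro s hs
    induction s with
    | zero => intro t ht; rw [Nat.le_zero.mp ht]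
    | succ s ihs =>
      intro t ht
      rcases Nat.le_succ_iff_eq_or_le.mp ht with h | h
      · rw [h]
      · exact le_trans (ihs (by omega) t h) (hmono s hs)
  -- chain monotonicity helper
  have chainmono : ∀ (m : ℕ) (idx : ℕ → ℕ),
      (∀ v, v + 1 < m → idx v < idx (v + 1)) →
      ∀ u v, u ≤ v → v < m → idx u ≤ idx v := by
    intro m idx h u v huv hv
    induction v with
    | zero => simp [Nat.le_zero.mp huv]
    | succ v ihv =>
      rcases Nat.le_succ_iff_eq_or_le.mp huv with h1 | h1
      · simp [h1]
      · exact le_trans (ihv h1 (by omega)) (le_of_lt (h v hv))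
  have key : ∀ j, j ≤ n → ∃ (m : ℕ) (idx : ℕ → ℕ) (A' : ℕ → ℝ),
      0 < m ∧
      (∀ v, v + 1 < m → idx v < idx (v + 1)) ∧
      idx (m - 1) = j ∧
      (∀ v, v + 1 < m → (1 + β) * a (idx v) ≤ a (idx (v + 1)) ∧ 0 ≤ (1 + β) * a (idx v)) ∧
      (∀ t, t ≤ idx 0 → A' t = a (idx 0)) ∧
      (∀ v, v + 1 < m → ∀ t, idx v < t → t ≤ idx (v + 1) → A' t = a (idx (v + 1))) ∧
      (∀ t, t ≤ j → a t ≤ A' t ∧ A' t ≤ (1 + β) * a t) := by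
    intro j
    induction j using Nat.strong_induction_on with
    | _ j ih =>
      intro hj
      have hne : ∃ t, a j ≤ (1 + β) * a t := by
        refine ⟨j, ?_⟩
        nlinarith [hnonneg j hj]
      have hfind : a j ≤ (1 + β) * a (Nat.find hne) := Nat.find_spec hne
      have hfle : Nat.find hne ≤ j := Nat.find_le (by nlinarith [hnonneg j hj])
      by_cases hi : Nat.find hne = 0
      · -- single element sequence
        refine ⟨1, fun _ => j, fun _ => a j, one_pos, by omega, rfl, by omega,
          fun t _ => rfl, by omega, ?_⟩
        intro t ht
        constructor
        · exact amono j hj t ht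
        · rw [hi] at hfind
          calc a j ≤ (1 + β) * a 0 := hfind
            _ ≤ (1 + β) * a t :=
              mul_le_mul_of_nonneg_left (amono t (le_trans ht hj) 0 (Nat.zero_le t))
                (by linarith)
      · set k := Nat.find hne - 1 with hk
        have hik : Nat.find hne = k + 1 := by omega
        have hkj : k < j := by omega
        have hkn : k ≤ n := by omega
        have hkbad : (1 + β) * a k < a j := by
          have := Nat.find_min hne (m := k) (by omega)
          linarith [not_le.mp this]
        obtain ⟨m', idx', A'', hm', hinc', htop', hrs', hbase', hstep', hbd'⟩ :=
          ih k hkj hkn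
        have hmax' : ∀ v, v < m' → idx' v ≤ k := by
          intro v hv
          have := chainmono m' idx' hinc' v (m' - 1) (by omega) (by omega)
          rw [htop'] at this; exact this
        refine ⟨m' + 1, fun v => if v < m' then idx' v else j,
          fun t => if t ≤ k then A'' t else a j, by omega, ?_, ?_, ?_, ?_, ?_, ?_⟩
        · intro v hv
          by_cases h1 : v + 1 < m'
          · simp only [if_pos h1, if_pos (by omega : v < m')]
            exact hinc' v h1
          · have hv1 : v + 1 = m' := by omega
            simp only [if_pos (by omega : v < m'), if_neg (by omega : ¬ v + 1 < m')]
            have : idx' v ≤ k := hmax' v (by omega)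
            omega
        · simp
        · intro v hv
          by_cases h1 : v + 1 < m'
          · simp only [if_pos h1, if_pos (by omega : v < m')]
            exact hrs' v h1
          · have hv1 : v + 1 = m' := by omega
            simp only [if_pos (by omega : v < m'), if_neg (by omega : ¬ v + 1 < m')]
            have hvk : idx' v = k := by rw [← htop']; congr 1; omega
            rw [hvk]
            exact ⟨le_of_lt hkbad, by nlinarith [hnonneg k hkn]⟩
        · intro t ht
          simp only [if_pos hm'] at ht ⊢
          have h0k : idx' 0 ≤ k := hmax' 0 hm'
          rw [if_pos (le_trans ht h0k)]
          exact hbase' t ht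
        · intro v hv t htl htr
          by_cases h1 : v + 1 < m'
          · simp only [if_pos h1, if_pos (by omega : v < m')] at htl htr ⊢
            rw [if_pos (le_trans htr (hmax' (v + 1) h1))]
            exact hstep' v h1 t htl htr
          · have hv1 : v + 1 = m' := by omega
            simp only [if_pos (by omega : v < m'),
              if_neg (by omega : ¬ v + 1 < m')] at htl htr ⊢
            have hvk : idx' v = k := by rw [← htop']; congr 1; omega
            rw [hvk] at htl
            rw [if_neg (by omega)]
        · intro t ht
          by_cases htk : t ≤ k
          · simp only [if_pos htk]
            exact hbd' t htk
          · simp only [if_neg htk]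
            constructor
            · exact amono j hj t ht
            · rw [hik] at hfind
              calc a j ≤ (1 + β) * a (k + 1) := hfind
                _ ≤ (1 + β) * a t :=
                  mul_le_mul_of_nonneg_left
                    (amono t (le_trans ht hj) (k + 1) (by omega)) (by linarith)
  exact key n le_rfl
end

section
/- Let 𝕄 be a nonempty family of subsets of {1,…,n}, let x : {1,…,n} → ℝ≥0, and set OPT = min_{Ω ∈ 𝕄} ∑_{i ∉ Ω} x_i. Let ε ∈ (0,1), let L ≥ 1 be a real number, and let W > 0 satisfy OPT ≤ W ≤ L·OPT. Define discretized weights x̂_i = ⌈x_i · n · L/(ε·W)⌉ when x_i ≤ W, and x̂_i = ⌈n·L/ε⌉ + n when x_i > W. If Ω̂ ∈ 𝕄 minimizes ∑_{i ∉ Ω} x̂_i over all Ω ∈ 𝕄, then ∑_{i ∉ Ω̂} x_i ≤ (1+ε)·OPT. -/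
/-- Let `𝕄` be a nonempty family of subsets of `{1,…,n}`, `x : {1,…,n} → ℝ≥0`,
and `OPT = min_{Ω ∈ 𝕄} ∑_{i ∉ Ω} x i`.  Let `ε ∈ (0,1)`, `L ≥ 1`, and `W > 0` with
`OPT ≤ W ≤ L * OPT`.  Define discretized weights `xh i = ⌈x i * n * L / (ε * W)⌉` when
`x i ≤ W`, and `xh i = ⌈n * L / ε⌉ + n` when `x i > W`.  If `Ωh ∈ 𝕄` minimizes
`∑_{i ∉ Ω} xh i` over `𝕄`, then `∑_{i ∉ Ωh} x i ≤ (1+ε) * OPT`. -/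
theorem stmt4 (n : ℕ) (𝕄 : Set (Finset (Fin n))) (h𝕄 : 𝕄.Nonempty)
    (x : Fin n → ℝ) (hx : ∀ i, 0 ≤ x i)
    (OPT : ℝ)
    (hOPT1 : ∃ Ω ∈ 𝕄, ∑ i ∈ Ωᶜ, x i = OPT)
    (hOPT2 : ∀ Ω ∈ 𝕄, OPT ≤ ∑ i ∈ Ωᶜ, x i)
    (ε : ℝ) (hε1 : 0 < ε) (hε2 : ε < 1)
    (L : ℝ) (hL : 1 ≤ L)
    (W : ℝ) (hW0 : 0 < W) (hW1 : OPT ≤ W) (hW2 : W ≤ L * OPT)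
    (xh : Fin n → ℝ)
    (hxh : ∀ i, xh i = if x i ≤ W then (⌈x i * n * L / (ε * W)⌉ : ℝ)
      else (⌈(n : ℝ) * L / ε⌉ : ℝ) + n)
    (Ωh : Finset (Fin n)) (hΩh : Ωh ∈ 𝕄)
    (hmin : ∀ Ω ∈ 𝕄, ∑ i ∈ Ωhᶜ, xh i ≤ ∑ i ∈ Ωᶜ, xh i) :
    ∑ i ∈ Ωhᶜ, x i ≤ (1 + ε) * OPT := by
  obtain ⟨Ω₀, hΩ₀, hΩ₀eq⟩ := hOPT1
  have hOPTnn : 0 ≤ OPT := hΩ₀eq ▸ Finset.sum_nonneg (fun i _ => hx i)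
  have hOPTpos : 0 < OPT := by nlinarith
  have hLpos : 0 < L := lt_of_lt_of_le one_pos hL
  -- n > 0
  have hn : 0 < (n : ℝ) := by
    rcases Nat.eq_zero_or_pos n with h | h
    · exfalso
      subst h
      have : Ω₀ᶜ = (∅ : Finset (Fin 0)) := Finset.eq_empty_of_isEmpty _
      rw [this, Finset.sum_empty] at hΩ₀eq
      nlinarith
    · exact_mod_cast h
  set c : ℝ := n * L / (ε * W) with hc_def
  have hc : 0 < c := by positivity
  -- every element outside Ω₀ has weight ≤ W
  have hΩ₀W : ∀ i ∈ Ω₀ᶜ, x i ≤ W := by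
    intro i hi
    have h1 : x i ≤ ∑ j ∈ Ω₀ᶜ, x j :=
      Finset.single_le_sum (fun j _ => hx j) hi
    linarith [hΩ₀eq ▸ h1]
  -- Ω₀ᶜ is nonempty since OPT > 0
  have hne : Ω₀ᶜ.Nonempty := by
    rcases Finset.eq_empty_or_nonempty Ω₀ᶜ with h | h
    · rw [h, Finset.sum_empty] at hΩ₀eq; nlinarith
    · exact h
  -- sum of xh over Ω₀ᶜ is < c * OPT + n
  have hsumA : ∑ i ∈ Ω₀ᶜ, xh i < c * OPT + n := by
    have h1 : ∑ i ∈ Ω₀ᶜ, xh i < ∑ i ∈ Ω₀ᶜ, (c * x i + 1) := by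
      apply Finset.sum_lt_sum_of_nonempty hne
      intro i hi
      rw [hxh i, if_pos (hΩ₀W i hi)]
      have : x i * n * L / (ε * W) = c * x i := by
        rw [hc_def]; ring
      rw [this]
      exact Int.ceil_lt_add_one _
    have h2 : ∑ i ∈ Ω₀ᶜ, (c * x i + 1) = c * OPT + Ω₀ᶜ.card := by
      rw [Finset.sum_add_distrib, ← Finset.mul_sum, hΩ₀eq, Finset.sum_const,
        nsmul_eq_mul, mul_one]
    have h3 : (Ω₀ᶜ.card : ℝ) ≤ n := by
      exact_mod_cast (Finset.card_le_card (Finset.subset_univ _)).trans_eq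
        (Finset.card_fin n)
    linarith
  -- c * OPT ≤ n * L / ε
  have hcOPT : c * OPT ≤ n * L / ε := by
    have h1 : c * OPT ≤ c * W := mul_le_mul_of_nonneg_left hW1 hc.le
    have h2 : c * W = n * L / ε := by
      rw [hc_def]; field_simp
    linarith
  -- xh is nonnegative
  have hxhnn : ∀ i, 0 ≤ xh i := by
    intro i
    rw [hxh i]
    split_ifs with h
    · have : (0 : ℝ) ≤ x i * n * L / (ε * W) :=
        div_nonneg (mul_nonneg (mul_nonneg (hx i) hn.le) hLpos.le) (by positivity)
      exact_mod_cast Int.ceil_nonneg this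
    · have h1 : (0:ℝ) ≤ (⌈(n : ℝ) * L / ε⌉ : ℝ) := by
        have : (0 : ℝ) ≤ n * L / ε := by positivity
        exact_mod_cast Int.ceil_nonneg this
      positivity
  -- all elements outside Ωh have weight ≤ W
  have hΩhW : ∀ i ∈ Ωhᶜ, x i ≤ W := by
    intro i hi
    by_contra hbad
    push_neg at hbad
    have h1 : xh i = (⌈(n : ℝ) * L / ε⌉ : ℝ) + n := by
      rw [hxh i, if_neg (not_le.mpr hbad)]
    have h2 : xh i ≤ ∑ j ∈ Ωhᶜ, xh j :=
      Finset.single_le_sum (fun j _ => hxhnn j) hi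
    have h3 : (n : ℝ) * L / ε ≤ (⌈(n : ℝ) * L / ε⌉ : ℝ) := Int.le_ceil _
    have h4 : ∑ j ∈ Ωhᶜ, xh j ≤ ∑ j ∈ Ω₀ᶜ, xh j := hmin Ω₀ hΩ₀
    linarith
  -- conclude
  have hfinal : c * ∑ i ∈ Ωhᶜ, x i ≤ ∑ i ∈ Ωhᶜ, xh i := by
    rw [Finset.mul_sum]
    apply Finset.sum_le_sum
    intro i hi
    rw [hxh i, if_pos (hΩhW i hi)]
    have : x i * n * L / (ε * W) = c * x i := by rw [hc_def]; ring
    rw [← this]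
    exact Int.le_ceil _
  have h4 : ∑ j ∈ Ωhᶜ, xh j ≤ ∑ j ∈ Ω₀ᶜ, xh j := hmin Ω₀ hΩ₀
  have hkey : c * ∑ i ∈ Ωhᶜ, x i < c * OPT + n := by linarith
  -- divide by c: ∑ x < OPT + n / c, and n / c = ε * W / L ≤ ε * OPT
  have hnc : (n : ℝ) = c * (ε * W / L) := by
    rw [hc_def]; field_simp
  have hWL : ε * W / L ≤ ε * OPT := by
    rw [div_le_iff₀ hLpos]
    nlinarith
  have : c * ∑ i ∈ Ωhᶜ, x i < c * ((1 + ε) * OPT) := by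
    rw [hnc] at hkey
    calc c * ∑ i ∈ Ωhᶜ, x i < c * OPT + c * (ε * W / L) := hkey
      _ ≤ c * OPT + c * (ε * OPT) := by nlinarith
      _ = c * ((1 + ε) * OPT) := by ring
  exact le_of_lt ((mul_lt_mul_iff_right₀ hc).mp this)
end

section
/- Let T be the perfect binary tree with n = 2^D − 1 nodes (D ≥ 1) with nonnegative node weights, and let 1 ≤ k ≤ n. Suppose Ω is a rooted subtree of T with exactly k nodes such that u_v ≥ u_{v'} for every v ∈ Ω and every v' ∉ Ω (i.e., Ω consists of k nodes whose subtree weights are largest). Then ∑_{v ∉ Ω} x_v ≤ D · min_{Ω' ∈ 𝕋_k} ∑_{v ∉ Ω'} x_v. Moreover, such a rooted subtree Ω exists. -/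
open scoped Classical

/-- Nodes of the perfect binary tree with `n` nodes are `1, …, n` in heap order: the root is `1`
and the parent of node `v ≥ 2` is `v / 2`.  A rooted subtree is a set of nodes containing the
root and closed under taking parents. -/
def isRootedSubtree (n : ℕ) (Ω : Finset ℕ) : Prop :=
  Ω ⊆ Finset.Icc 1 n ∧ 1 ∈ Ω ∧ ∀ v ∈ Ω, 2 ≤ v → v / 2 ∈ Ω

/-- The subtree weight `u v`: the sum of the weights of all descendants of `v`
(`w` is a descendant of `v` iff `v` is obtained from `w` by iterated parent steps). -/
noncomputable def subtreeWeight (n : ℕ) (x : ℕ → ℝ) (v : ℕ) : ℝ :=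
  ∑ w ∈ (Finset.Icc 1 n).filter (fun w => ∃ j : ℕ, w / 2 ^ j = v), x w

/-- The tail value of `Ω`: the total weight of the nodes outside `Ω`. -/
noncomputable def tailValue (n : ℕ) (x : ℕ → ℝ) (Ω : Finset ℕ) : ℝ :=
  ∑ v ∈ Finset.Icc 1 n \ Ω, x v

namespace Stmt5Aux

/-- Descendants of `v` among nodes `1..n`. -/
noncomputable def Desc (n v : ℕ) : Finset ℕ :=
  (Finset.Icc 1 n).filter (fun w => ∃ j : ℕ, w / 2 ^ j = v)

lemma subtreeWeight_eq (n : ℕ) (x : ℕ → ℝ) (v : ℕ) :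
    subtreeWeight n x v = ∑ w ∈ Desc n v, x w := rfl

lemma div_pow_div (d i j : ℕ) : d / 2 ^ i / 2 ^ j = d / 2 ^ (i + j) := by
  rw [Nat.div_div_eq_div_mul, pow_add]

lemma subtreeWeight_nonneg (n : ℕ) (x : ℕ → ℝ) (hx : ∀ v, 0 ≤ x v) (v : ℕ) :
    0 ≤ subtreeWeight n x v :=
  Finset.sum_nonneg fun i _ => hx i

lemma tailValue_nonneg (n : ℕ) (x : ℕ → ℝ) (hx : ∀ v, 0 ≤ x v) (Ω : Finset ℕ) :
    0 ≤ tailValue n x Ω :=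
  Finset.sum_nonneg fun i _ => hx i

lemma mem_desc_self {n v : ℕ} (hv : v ∈ Finset.Icc 1 n) : v ∈ Desc n v := by
  simp only [Desc, Finset.mem_filter]
  exact ⟨hv, 0, by simp⟩

lemma self_le_subtreeWeight {n v : ℕ} (x : ℕ → ℝ) (hx : ∀ v, 0 ≤ x v)
    (hv : v ∈ Finset.Icc 1 n) : x v ≤ subtreeWeight n x v :=
  Finset.single_le_sum (fun i _ => hx i) (mem_desc_self hv)

lemma desc_mono {n v v' : ℕ} (h : ∃ j : ℕ, v' / 2 ^ j = v) :
    Desc n v' ⊆ Desc n v := by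
  intro w hw
  simp only [Desc, Finset.mem_filter] at hw ⊢
  obtain ⟨hw1, i, hi⟩ := hw
  obtain ⟨j, hj⟩ := h
  exact ⟨hw1, i + j, by rw [← div_pow_div, hi, hj]⟩

lemma subtreeWeight_mono {n v v' : ℕ} (x : ℕ → ℝ) (hx : ∀ v, 0 ≤ x v)
    (h : ∃ j : ℕ, v' / 2 ^ j = v) :
    subtreeWeight n x v' ≤ subtreeWeight n x v :=
  Finset.sum_le_sum_of_subset_of_nonneg (desc_mono h) (fun i _ _ => hx i)

lemma root_anc {w : ℕ} (hw : 1 ≤ w) : w / 2 ^ w.log2 = 1 := by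
  have h1 : 2 ^ w.log2 ≤ w := Nat.log2_self_le (by omega)
  have h2 : w < 2 ^ (w.log2 + 1) := Nat.lt_log2_self
  refine Nat.div_eq_of_lt_le (by omega) ?_
  rw [pow_succ] at h2; omega

/-- Ancestors of members of a rooted subtree are members. -/
lemma anc_mem {n : ℕ} {Ω : Finset ℕ} (h : isRootedSubtree n Ω) :
    ∀ (j d : ℕ), d ∈ Ω → 1 ≤ d / 2 ^ j → d / 2 ^ j ∈ Ω := by
  intro j
  induction j with
  | zero => simpa using fun d hd _ => hd
  | succ j ih =>
    intro d hd h1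
    have e : d / 2 ^ (j + 1) = d / 2 ^ j / 2 := by
      rw [Nat.div_div_eq_div_mul, pow_succ]
    rw [e] at h1 ⊢
    have h2 : 2 ≤ d / 2 ^ j := by omega
    exact h.2.2 _ (ih d hd (by omega)) h2

lemma desc_subset_compl {n w : ℕ} {Ω' : Finset ℕ} (hΩ' : isRootedSubtree n Ω')
    (hw1 : 1 ≤ w) (hw : w ∉ Ω') : Desc n w ⊆ Finset.Icc 1 n \ Ω' := by
  intro d hd
  simp only [Desc, Finset.mem_filter] at hd
  obtain ⟨hd1, j, hj⟩ := hd
  rw [Finset.mem_sdiff]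
  refine ⟨hd1, fun hdΩ => hw ?_⟩
  rw [← hj]; exact anc_mem hΩ' j d hdΩ (by omega)

lemma log2_lt_of_anc {v w : ℕ} (hw : 1 ≤ w) (hne : v ≠ w) {c : ℕ} (hc : v / 2 ^ c = w) :
    w.log2 < v.log2 := by
  have hc1 : 1 ≤ c := by
    rcases Nat.eq_zero_or_pos c with h | h
    · exfalso; apply hne; rw [← hc, h]; simp
    · exact h
  have hv1 : 1 ≤ v := by
    by_contra h
    have : v = 0 := by omega
    rw [this] at hc; simp at hc; omega
  have hle : v / 2 ^ c ≤ v / 2 := Nat.div_le_div_left (by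
    calc (2:ℕ) = 2 ^ 1 := (pow_one 2).symm
    _ ≤ 2 ^ c := Nat.pow_le_pow_right (by norm_num) hc1) (by norm_num)
  have hv2 : v < 2 ^ (v.log2 + 1) := Nat.lt_log2_self
  have : w < 2 ^ v.log2 := by
    rw [← hc]
    have : v / 2 < 2 ^ v.log2 := by
      rw [pow_succ] at hv2; omega
    omega
  exact (Nat.log2_lt (by omega)).2 this

lemma desc_disjoint {n v w : ℕ} (hv : 1 ≤ v) (hw : 1 ≤ w) (hne : v ≠ w)
    (hlog : v.log2 = w.log2) : Disjoint (Desc n v) (Desc n w) := by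
  rw [Finset.disjoint_left]
  intro d hdv hdw
  simp only [Desc, Finset.mem_filter] at hdv hdw
  obtain ⟨_, i, hi⟩ := hdv
  obtain ⟨_, j, hj⟩ := hdw
  rcases le_total i j with h | h
  · have heq : v / 2 ^ (j - i) = w := by
      rw [← hi, div_pow_div]
      have : i + (j - i) = j := by omega
      rw [this, hj]
    have := log2_lt_of_anc hw hne heq
    omega
  · have heq : w / 2 ^ (i - j) = v := by
      rw [← hj, div_pow_div]
      have : j + (i - j) = i := by omega
      rw [this, hi]
    have := log2_lt_of_anc hv (Ne.symm hne) heq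
    omega

/-- Sum of subtree weights over an antichain (same log2) outside `Ω'` is at most the tail. -/
lemma antichain_sum_le {n a : ℕ} {Ω' A : Finset ℕ} (x : ℕ → ℝ) (hx : ∀ v, 0 ≤ x v)
    (hΩ' : isRootedSubtree n Ω') (hA1 : ∀ w ∈ A, 1 ≤ w) (hA2 : ∀ w ∈ A, w ∉ Ω')
    (hA3 : ∀ w ∈ A, w.log2 = a) :
    ∑ w ∈ A, subtreeWeight n x w ≤ tailValue n x Ω' := by
  have hdisj : (A : Set ℕ).PairwiseDisjoint (Desc n) := by
    intro v hv w hw hne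
    exact desc_disjoint (hA1 v hv) (hA1 w hw) hne ((hA3 v hv).trans (hA3 w hw).symm)
  have h1 : ∑ w ∈ A, subtreeWeight n x w = ∑ d ∈ A.biUnion (Desc n), x d :=
    (Finset.sum_biUnion hdisj).symm
  rw [h1, tailValue]
  refine Finset.sum_le_sum_of_subset_of_nonneg ?_ (fun i _ _ => hx i)
  intro d hd
  rw [Finset.mem_biUnion] at hd
  obtain ⟨w, hwA, hdw⟩ := hd
  exact desc_subset_compl hΩ' (hA1 w hwA) (hA2 w hwA) hdw

/-- Greedy construction of the top-`k` rooted subtree. -/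
lemma exists_greedy (n : ℕ) (x : ℕ → ℝ) (hx : ∀ v, 0 ≤ x v) :
    ∀ k, 1 ≤ k → k ≤ n → ∃ Ω : Finset ℕ, isRootedSubtree n Ω ∧ Ω.card = k ∧
      ∀ v ∈ Ω, ∀ v' ∈ Finset.Icc 1 n, v' ∉ Ω →
        subtreeWeight n x v' ≤ subtreeWeight n x v := by
  intro k
  induction k with
  | zero => omega
  | succ k ih =>
    intro _ hk2
    rcases Nat.eq_zero_or_pos k with rfl | hk
    · -- base case: Ω = {1}
      refine ⟨{1}, ⟨?_, by simp, ?_⟩, by simp, ?_⟩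
      · intro v hv; simp at hv; subst hv; simp; omega
      · intro v hv; simp at hv; omega
      · intro v hv v' hv' _
        simp at hv; subst hv
        rw [Finset.mem_Icc] at hv'
        exact subtreeWeight_mono x hx ⟨v'.log2, root_anc hv'.1⟩
    · obtain ⟨Ω, hΩ, hcard, hmax⟩ := ih hk (by omega)
      have hCcard : (Finset.Icc 1 n \ Ω).card = n - k := by
        rw [Finset.card_sdiff_of_subset hΩ.1, Nat.card_Icc, hcard]
        omega
      have hCne : (Finset.Icc 1 n \ Ω).Nonempty := by
        rw [← Finset.card_pos, hCcard]; omega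
      set C := Finset.Icc 1 n \ Ω with hC
      obtain ⟨b, hbC, hb⟩ := Finset.exists_max_image C (subtreeWeight n x) hCne
      set M := C.filter (fun v => ∀ w ∈ C, subtreeWeight n x w ≤ subtreeWeight n x v)
        with hM
      have hMne : M.Nonempty := ⟨b, by rw [hM, Finset.mem_filter]; exact ⟨hbC, hb⟩⟩
      set m := M.min' hMne with hm
      have hmM : m ∈ M := Finset.min'_mem _ _
      rw [hM, Finset.mem_filter] at hmM
      obtain ⟨hmC, hmmax⟩ := hmM
      rw [hC, Finset.mem_sdiff, Finset.mem_Icc] at hmC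
      obtain ⟨⟨hm1, hmn⟩, hmΩ⟩ := hmC
      have hparent : 2 ≤ m → m / 2 ∈ Ω := by
        intro h2
        by_contra hp
        have hpC : m / 2 ∈ C := by
          rw [hC, Finset.mem_sdiff, Finset.mem_Icc]
          exact ⟨⟨by omega, le_trans (Nat.div_le_self _ _) hmn⟩, hp⟩
        have hple : subtreeWeight n x m ≤ subtreeWeight n x (m / 2) :=
          subtreeWeight_mono x hx ⟨1, by rw [pow_one]⟩
        have hpM : m / 2 ∈ M := by
          rw [hM, Finset.mem_filter]
          exact ⟨hpC, fun w hw => le_trans (hmmax w hw) hple⟩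
        have := Finset.min'_le M _ hpM
        rw [← hm] at this
        have : m / 2 < m := Nat.div_lt_self (by omega) (by norm_num)
        omega
      refine ⟨insert m Ω, ⟨?_, Finset.mem_insert_of_mem hΩ.2.1, ?_⟩, ?_, ?_⟩
      · intro v hv
        rcases Finset.mem_insert.1 hv with rfl | hv
        · rw [Finset.mem_Icc]; omega
        · exact hΩ.1 hv
      · intro v hv h2
        rcases Finset.mem_insert.1 hv with rfl | hv
        · exact Finset.mem_insert_of_mem (hparent h2)
        · exact Finset.mem_insert_of_mem (hΩ.2.2 v hv h2)
      · rw [Finset.card_insert_of_notMem hmΩ, hcard]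
      · intro v hv v' hv' hv'n
        have hv'C : v' ∈ C := by
          rw [hC, Finset.mem_sdiff]
          exact ⟨hv', fun h => hv'n (Finset.mem_insert_of_mem h)⟩
        rcases Finset.mem_insert.1 hv with rfl | hv
        · exact hmmax v' hv'C
        · exact hmax v hv v' hv' (fun h => hv'n (Finset.mem_insert_of_mem h))

end Stmt5Aux

open Stmt5Aux in
theorem stmt5 (D n : ℕ) (hD : 1 ≤ D) (hn : n = 2 ^ D - 1)
    (x : ℕ → ℝ) (hx : ∀ v, 0 ≤ x v)
    (k : ℕ) (hk1 : 1 ≤ k) (hk2 : k ≤ n) :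
    (∀ Ω : Finset ℕ, isRootedSubtree n Ω → Ω.card = k →
      (∀ v ∈ Ω, ∀ v' ∈ Finset.Icc 1 n, v' ∉ Ω →
        subtreeWeight n x v' ≤ subtreeWeight n x v) →
      ∀ Ω' : Finset ℕ, isRootedSubtree n Ω' → Ω'.card ≤ k →
        tailValue n x Ω ≤ (D : ℝ) * tailValue n x Ω') ∧
    (∃ Ω : Finset ℕ, isRootedSubtree n Ω ∧ Ω.card = k ∧
      ∀ v ∈ Ω, ∀ v' ∈ Finset.Icc 1 n, v' ∉ Ω →
        subtreeWeight n x v' ≤ subtreeWeight n x v) := by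
  constructor
  · intro Ω hΩ hcard hmax Ω' hΩ' hcard'
    have htail' : 0 ≤ tailValue n x Ω' := tailValue_nonneg n x hx Ω'
    -- decomposition of tail Ω
    have hdecomp : tailValue n x Ω ≤ ∑ v ∈ Ω' \ Ω, x v + tailValue n x Ω' := by
      rw [tailValue, ← Finset.sum_inter_add_sum_sdiff (Finset.Icc 1 n \ Ω) Ω' x]
      have e1 : (Finset.Icc 1 n \ Ω) ∩ Ω' = Ω' \ Ω := by
        ext v
        simp only [Finset.mem_inter, Finset.mem_sdiff]
        constructor
        · rintro ⟨⟨_, h2⟩, h3⟩; exact ⟨h3, h2⟩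
        · rintro ⟨h1, h2⟩; exact ⟨⟨hΩ'.1 h1, h2⟩, h1⟩
      rw [e1]
      gcongr
      refine Finset.sum_le_sum_of_subset_of_nonneg ?_ (fun i _ _ => hx i)
      intro v hv
      simp only [Finset.mem_sdiff] at hv ⊢
      exact ⟨hv.1.1, hv.2⟩
    set S := Ω \ Ω' with hS
    set S' := Ω' \ Ω with hS'
    have hcardSS' : S'.card ≤ S.card := by
      have h1 : S'.card + (Ω' ∩ Ω).card = Ω'.card :=
        Finset.card_sdiff_add_card_inter Ω' Ω
      have h2 : S.card + (Ω ∩ Ω').card = Ω.card :=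
        Finset.card_sdiff_add_card_inter Ω Ω'
      rw [Finset.inter_comm] at h1
      omega
    rcases Finset.eq_empty_or_nonempty S' with hS'e | hS'ne
    · rw [hS'e] at hdecomp
      simp at hdecomp
      calc tailValue n x Ω ≤ tailValue n x Ω' := hdecomp
        _ = 1 * tailValue n x Ω' := (one_mul _).symm
        _ ≤ (D : ℝ) * tailValue n x Ω' := by
            apply mul_le_mul_of_nonneg_right _ htail'
            exact_mod_cast hD
    · -- S nonempty, hence D ≥ 2
      have hSne : S.Nonempty := by
        rw [← Finset.card_pos]
        have h := Finset.card_pos.2 hS'ne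
        omega
      have hSsub : ∀ v ∈ S, 2 ≤ v ∧ v ≤ n ∧ v ∉ Ω' ∧ v ∈ Ω := by
        intro v hv
        rw [hS, Finset.mem_sdiff] at hv
        have hvIcc := hΩ.1 hv.1
        rw [Finset.mem_Icc] at hvIcc
        have hv1 : v ≠ 1 := fun h => hv.2 (h ▸ hΩ'.2.1)
        exact ⟨by omega, hvIcc.2, hv.2, hv.1⟩
      have hD2 : 2 ≤ D := by
        by_contra h
        have hD1 : D = 1 := by omega
        obtain ⟨v, hv⟩ := hSne
        obtain ⟨h2v, hvn, -, -⟩ := hSsub v hv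
        rw [hn, hD1] at hvn
        norm_num at hvn
        omega
      -- pigeonhole on log2 levels
      set t := Finset.Icc 1 (D - 1) with ht
      have htcard : t.card = D - 1 := by rw [ht, Nat.card_Icc]; omega
      have hmaps : ∀ v ∈ S, v.log2 ∈ t := by
        intro v hv
        obtain ⟨h2, hvn, _, _⟩ := hSsub v hv
        rw [ht, Finset.mem_Icc]
        constructor
        · exact (Nat.le_log2 (by omega)).2 (by simpa using h2)
        · have : v.log2 < D := (Nat.log2_lt (by omega)).2 (by
            rw [hn] at hvn
            have : (0:ℕ) < 2 ^ D := Nat.pow_pos (by norm_num)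
            omega)
          omega
      have hfib := Finset.card_eq_sum_card_fiberwise hmaps
      have htne : t.Nonempty := by
        rw [← Finset.card_pos, htcard]; omega
      obtain ⟨a, haT, ha⟩ := Finset.exists_max_image t
        (fun b => (S.filter (fun v => v.log2 = b)).card) htne
      set A := S.filter (fun v => v.log2 = a) with hA
      have hScard : S.card ≤ (D - 1) * A.card := by
        rw [hfib]
        calc ∑ b ∈ t, (S.filter (fun v => v.log2 = b)).card
            ≤ ∑ _b ∈ t, A.card := Finset.sum_le_sum (fun b hb => ha b hb)
          _ = t.card * A.card := by rw [Finset.sum_const, smul_eq_mul]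
          _ = (D - 1) * A.card := by rw [htcard]
      have hAne : A.Nonempty := by
        rcases Finset.eq_empty_or_nonempty A with hAe | h
        · exfalso
          rw [hAe, Finset.card_empty, Nat.mul_zero, Nat.le_zero] at hScard
          have := Finset.card_pos.2 hSne
          omega
        · exact h
      obtain ⟨w₀, hw₀A, hw₀⟩ := Finset.exists_min_image A (subtreeWeight n x) hAne
      have hASsub : A ⊆ S := Finset.filter_subset _ _
      have hw₀nonneg : 0 ≤ subtreeWeight n x w₀ := subtreeWeight_nonneg n x hx w₀
      -- antichain bound: A.card * u w₀ ≤ tail Ω'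
      have hanti : (A.card : ℝ) * subtreeWeight n x w₀ ≤ tailValue n x Ω' := by
        calc (A.card : ℝ) * subtreeWeight n x w₀
            ≤ ∑ w ∈ A, subtreeWeight n x w := by
              have := Finset.card_nsmul_le_sum A (subtreeWeight n x)
                (subtreeWeight n x w₀) hw₀
              simpa [nsmul_eq_mul] using this
          _ ≤ tailValue n x Ω' := by
              refine antichain_sum_le (a := a) x hx hΩ' ?_ ?_ ?_
              · intro w hw; exact le_trans (by norm_num) (hSsub w (hASsub hw)).1
              · intro w hw; exact (hSsub w (hASsub hw)).2.2.1
              · intro w hw; rw [hA, Finset.mem_filter] at hw; exact hw.2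
      -- bound on sum over S'
      have hSsum : ∑ v ∈ S', x v ≤ ((D : ℝ) - 1) * tailValue n x Ω' := by
        have hterm : ∀ v ∈ S', x v ≤ subtreeWeight n x w₀ := by
          intro v hv
          rw [hS', Finset.mem_sdiff] at hv
          have hvIcc : v ∈ Finset.Icc 1 n := hΩ'.1 hv.1
          calc x v ≤ subtreeWeight n x v := self_le_subtreeWeight x hx hvIcc
            _ ≤ subtreeWeight n x w₀ :=
              hmax w₀ (hSsub w₀ (hASsub hw₀A)).2.2.2 v hvIcc hv.2
        calc ∑ v ∈ S', x v ≤ (S'.card : ℝ) * subtreeWeight n x w₀ := by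
              have := Finset.sum_le_card_nsmul S' x (subtreeWeight n x w₀) hterm
              simpa [nsmul_eq_mul] using this
          _ ≤ (((D - 1) * A.card : ℕ) : ℝ) * subtreeWeight n x w₀ := by
              apply mul_le_mul_of_nonneg_right _ hw₀nonneg
              exact_mod_cast le_trans hcardSS' hScard
          _ = ((D : ℝ) - 1) * ((A.card : ℝ) * subtreeWeight n x w₀) := by
              push_cast [Nat.cast_sub (by omega : 1 ≤ D)]
              ring
          _ ≤ ((D : ℝ) - 1) * tailValue n x Ω' := by
              apply mul_le_mul_of_nonneg_left hanti
              have : (2 : ℝ) ≤ (D : ℝ) := by exact_mod_cast hD2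
              linarith
      calc tailValue n x Ω ≤ ∑ v ∈ S', x v + tailValue n x Ω' := hdecomp
        _ ≤ ((D : ℝ) - 1) * tailValue n x Ω' + tailValue n x Ω' := by linarith
        _ = (D : ℝ) * tailValue n x Ω' := by ring
  · exact exists_greedy n x hx k hk1 hk2
end

section
/- Let 𝕄 be a nonempty family of subsets of {1,…,n}, each of size at most k (k ≥ 1 an integer), let x : {1,…,n} → ℝ≥0, and set OPT_H = max_{Ω ∈ 𝕄} ∑_{i ∈ Ω} x_i. Let ε ∈ (0,1) and let W be a real number with 0 < W ≤ OPT_H. Define x̂_i = ⌊k·x_i/(ε·W)⌋ for each i. If Ω̂ ∈ 𝕄 maximizes ∑_{i ∈ Ω} x̂_i over all Ω ∈ 𝕄, then ∑_{i ∈ Ω̂} x_i ≥ (1−ε)·OPT_H. -/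
/-- Let `𝕄` be a nonempty family of subsets of `{1,…,n}` of size at most `k`
(`k ≥ 1`), `x : {1,…,n} → ℝ≥0`, and `OPTH = max_{Ω ∈ 𝕄} ∑_{i ∈ Ω} x i`.  Let `ε ∈ (0,1)` and
`0 < W ≤ OPTH`.  Define `xh i = ⌊k * x i / (ε * W)⌋`.  If `Ωh ∈ 𝕄` maximizes
`∑_{i ∈ Ω} xh i` over `𝕄`, then `∑_{i ∈ Ωh} x i ≥ (1 - ε) * OPTH`. -/
theorem stmt6 (n k : ℕ) (hk : 1 ≤ k)
    (𝕄 : Set (Finset (Fin n))) (h𝕄 : 𝕄.Nonempty)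
    (hcard : ∀ Ω ∈ 𝕄, Ω.card ≤ k)
    (x : Fin n → ℝ) (hx : ∀ i, 0 ≤ x i)
    (OPTH : ℝ)
    (hOPT1 : ∃ Ω ∈ 𝕄, ∑ i ∈ Ω, x i = OPTH)
    (hOPT2 : ∀ Ω ∈ 𝕄, ∑ i ∈ Ω, x i ≤ OPTH)
    (ε : ℝ) (hε1 : 0 < ε) (hε2 : ε < 1)
    (W : ℝ) (hW0 : 0 < W) (hW1 : W ≤ OPTH)
    (xh : Fin n → ℝ) (hxh : ∀ i, xh i = (⌊(k : ℝ) * x i / (ε * W)⌋ : ℝ))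
    (Ωh : Finset (Fin n)) (hΩh : Ωh ∈ 𝕄)
    (hmax : ∀ Ω ∈ 𝕄, ∑ i ∈ Ω, xh i ≤ ∑ i ∈ Ωh, xh i) :
    (1 - ε) * OPTH ≤ ∑ i ∈ Ωh, x i := by
  obtain ⟨Ωs, hΩs, hsum⟩ := hOPT1
  have hk0 : (0:ℝ) < k := by exact_mod_cast Nat.lt_of_lt_of_le Nat.zero_lt_one hk
  set c : ℝ := ε * W / k with hc
  have hc0 : 0 < c := by positivity
  have heq : ∀ i, (k : ℝ) * x i / (ε * W) = x i / c := by
    intro i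
    field_simp [hc]
    rw [hc]; field_simp
  have h1 : ∀ i, c * xh i ≤ x i := by
    intro i
    rw [hxh, heq]
    calc c * (⌊x i / c⌋ : ℝ) ≤ c * (x i / c) :=
          mul_le_mul_of_nonneg_left (Int.floor_le _) hc0.le
      _ = x i := by field_simp
  have h2 : ∀ i, x i - c ≤ c * xh i := by
    intro i
    rw [hxh, heq]
    have h := mul_lt_mul_of_pos_left (Int.sub_one_lt_floor (x i / c)) hc0
    have hx' : c * (x i / c - 1) = x i - c := by field_simp
    linarith
  have hA : ∑ i ∈ Ωs, x i - c * Ωs.card ≤ ∑ i ∈ Ωs, c * xh i := by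
    calc ∑ i ∈ Ωs, x i - c * Ωs.card = ∑ i ∈ Ωs, (x i - c) := by
          rw [Finset.sum_sub_distrib, Finset.sum_const, nsmul_eq_mul]; ring
      _ ≤ ∑ i ∈ Ωs, c * xh i := Finset.sum_le_sum fun i _ => h2 i
  have hB : ∑ i ∈ Ωs, c * xh i ≤ ∑ i ∈ Ωh, c * xh i := by
    rw [← Finset.mul_sum, ← Finset.mul_sum]
    exact mul_le_mul_of_nonneg_left (hmax _ hΩs) hc0.le
  have hC : ∑ i ∈ Ωh, c * xh i ≤ ∑ i ∈ Ωh, x i :=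
    Finset.sum_le_sum fun i _ => h1 i
  have hcard' : (Ωs.card : ℝ) ≤ k := by exact_mod_cast hcard _ hΩs
  have hck : c * Ωs.card ≤ ε * W := by
    calc c * Ωs.card ≤ c * k := mul_le_mul_of_nonneg_left hcard' hc0.le
      _ = ε * W := by rw [hc]; field_simp
  have hεW : ε * W ≤ ε * OPTH := mul_le_mul_of_nonneg_left hW1 hε1.le
  linarith
end

section
/- Let T be the perfect binary tree with n = 2^D − 1 nodes (D ≥ 1) with nonnegative node weights, and let k be an integer with D ≤ k ≤ n. Let q = ⌊k/D⌋ and let Q be a set of q nodes such that x_v ≥ x_{v'} for every v ∈ Q and every v' ∉ Q (i.e., Q consists of q nodes of largest weight). Let Ω̂ be the set of all nodes lying on the path from the root to some node of Q, and let W = ∑_{v ∈ Ω̂} x_v. Then Ω̂ is a rooted subtree of T with at most k nodes, and W ≤ OPT_H ≤ (2D+1)·W, where OPT_H = max_{Ω ∈ 𝕋_k} ∑_{v ∈ Ω} x_v. -/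
open scoped Classical

/-- In the perfect binary tree with `n = 2^D - 1` nodes (`D ≥ 1`) with nonnegative
weights, for an integer `D ≤ k ≤ n`, set `q = ⌊k / D⌋` and let `Q` be a set of `q` nodes of
largest weight.  Let `Ωh` consist of all nodes lying on the path from the root to some node of
`Q` (i.e. all ancestors of nodes of `Q`), and `W = ∑_{v ∈ Ωh} x v`.  Then `Ωh` is a rooted
subtree with at most `k` nodes and `W ≤ OPTH ≤ (2D+1) * W`, where
`OPTH = max_{Ω ∈ 𝕋_k} ∑_{v ∈ Ω} x v`. -/
theorem stmt7 (D n : ℕ) (hD : 1 ≤ D) (hn : n = 2 ^ D - 1)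
    (x : ℕ → ℝ) (hx : ∀ v, 0 ≤ x v)
    (k : ℕ) (hkD : D ≤ k) (hkn : k ≤ n)
    (q : ℕ) (hq : q = k / D)
    (Q : Finset ℕ) (hQsub : Q ⊆ Finset.Icc 1 n) (hQcard : Q.card = q)
    (hQbig : ∀ v ∈ Q, ∀ v' ∈ Finset.Icc 1 n, v' ∉ Q → x v' ≤ x v)
    (Ωh : Finset ℕ)
    (hΩh : Ωh = (Finset.Icc 1 n).filter (fun v => ∃ w ∈ Q, ∃ j : ℕ, w / 2 ^ j = v))
    (W : ℝ) (hW : W = ∑ v ∈ Ωh, x v)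
    (OPTH : ℝ)
    (hOPTH : IsGreatest {t : ℝ | ∃ Ω : Finset ℕ, isRootedSubtree n Ω ∧ Ω.card ≤ k ∧
      t = ∑ v ∈ Ω, x v} OPTH) :
    isRootedSubtree n Ωh ∧ Ωh.card ≤ k ∧ W ≤ OPTH ∧ OPTH ≤ (2 * (D : ℝ) + 1) * W := by
  have h2D : 2 ≤ 2 ^ D := by
    calc 2 = 2 ^ 1 := by norm_num
    _ ≤ 2 ^ D := Nat.pow_le_pow_right (by norm_num) hD
  have hn1 : 1 ≤ n := by omega
  have hq1 : 1 ≤ q := by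
    rw [hq]; exact (Nat.one_le_div_iff (by omega)).mpr hkD
  have hQne : Q.Nonempty := Finset.card_pos.mp (by omega)
  -- every w ∈ Q satisfies 1 ≤ w ≤ n < 2^D
  have hQbd : ∀ w ∈ Q, 1 ≤ w ∧ w < 2 ^ D := by
    intro w hw
    have := Finset.mem_Icc.mp (hQsub hw)
    omega
  -- any nonzero quotient forces j < D
  have hjD : ∀ w ∈ Q, ∀ j : ℕ, 1 ≤ w / 2 ^ j → j < D := by
    intro w hw j hj
    by_contra h
    push_neg at h
    have hw2 : w < 2 ^ j := lt_of_lt_of_le (hQbd w hw).2 (Nat.pow_le_pow_right (by norm_num) h)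
    have : w / 2 ^ j = 0 := Nat.div_eq_of_lt hw2
    omega
  -- Q ⊆ Ωh
  have hQΩh : Q ⊆ Ωh := by
    intro w hw
    rw [hΩh, Finset.mem_filter]
    exact ⟨hQsub hw, w, hw, 0, by simp⟩
  -- Ωh is a rooted subtree
  have hsubtree : isRootedSubtree n Ωh := by
    refine ⟨by rw [hΩh]; exact Finset.filter_subset _ _, ?_, ?_⟩
    · obtain ⟨w, hw⟩ := hQne
      rw [hΩh, Finset.mem_filter]
      refine ⟨Finset.mem_Icc.mpr ⟨le_refl 1, hn1⟩, w, hw, Nat.log 2 w, ?_⟩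
      have h1 : 2 ^ Nat.log 2 w ≤ w := Nat.pow_log_le_self 2 (by have := (hQbd w hw).1; omega)
      have h2 : w < 2 ^ (Nat.log 2 w + 1) := Nat.lt_pow_succ_log_self (by norm_num) w
      have h3 : 1 ≤ w / 2 ^ Nat.log 2 w := (Nat.one_le_div_iff (Nat.pow_pos (by norm_num))).mpr h1
      have h4 : w / 2 ^ Nat.log 2 w < 2 := by
        apply Nat.div_lt_of_lt_mul
        calc w < 2 ^ (Nat.log 2 w + 1) := h2
        _ = 2 ^ Nat.log 2 w * 2 := by ring
      omega
    · intro v hv hv2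
      rw [hΩh, Finset.mem_filter] at hv ⊢
      obtain ⟨hvI, w, hw, j, hj⟩ := hv
      have hvI' := Finset.mem_Icc.mp hvI
      refine ⟨Finset.mem_Icc.mpr ⟨by omega, by omega⟩, w, hw, j + 1, ?_⟩
      rw [pow_succ, ← Nat.div_div_eq_div_mul, hj]
  -- cardinality bound
  have hcard : Ωh.card ≤ k := by
    have hsub : Ωh ⊆ Q.biUnion (fun w => (Finset.range D).image (fun j => w / 2 ^ j)) := by
      intro v hv
      rw [hΩh, Finset.mem_filter] at hv
      obtain ⟨hvI, w, hw, j, hj⟩ := hv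
      have hv1 : 1 ≤ v := (Finset.mem_Icc.mp hvI).1
      rw [Finset.mem_biUnion]
      exact ⟨w, hw, Finset.mem_image.mpr ⟨j, Finset.mem_range.mpr (hjD w hw j (hj ▸ hv1)), hj⟩⟩
    calc Ωh.card ≤ (Q.biUnion (fun w => (Finset.range D).image (fun j => w / 2 ^ j))).card :=
          Finset.card_le_card hsub
      _ ≤ ∑ w ∈ Q, ((Finset.range D).image (fun j => w / 2 ^ j)).card := Finset.card_biUnion_le
      _ ≤ ∑ w ∈ Q, D := Finset.sum_le_sum (fun w _ => le_trans Finset.card_image_le (by simp))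
      _ = q * D := by rw [Finset.sum_const, smul_eq_mul, hQcard]
      _ ≤ k := by rw [hq]; exact Nat.div_mul_le_self k D
  refine ⟨hsubtree, hcard, ?_, ?_⟩
  · exact hOPTH.2 ⟨Ωh, hsubtree, hcard, hW⟩
  · obtain ⟨⟨Ω, hΩsub, hΩcard, hΩsum⟩, _⟩ := hOPTH
    -- minimum weight element of Q
    obtain ⟨w₀, hw₀, hmin⟩ := Finset.exists_min_image Q x hQne
    have hW0 : 0 ≤ W := by
      rw [hW]; exact Finset.sum_nonneg (fun v _ => hx v)
    -- q * x w₀ ≤ W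
    have hqm : (q : ℝ) * x w₀ ≤ W := by
      have h1 : (Q.card : ℝ) * x w₀ ≤ ∑ v ∈ Q, x v := by
        have := Finset.card_nsmul_le_sum Q x (x w₀) hmin
        simpa [nsmul_eq_mul] using this
      have h2 : ∑ v ∈ Q, x v ≤ W := by
        rw [hW]
        exact Finset.sum_le_sum_of_subset_of_nonneg hQΩh (fun v _ _ => hx v)
      rw [← hQcard]; linarith
    have hm0 : 0 ≤ x w₀ := hx w₀
    -- k ≤ 2 * q * D
    have hk2qD : k ≤ 2 * q * D := by
      have h1 := Nat.div_add_mod k D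
      have h2 : k % D < D := Nat.mod_lt k (by omega)
      have : q * D ≤ 2 * q * D ∧ D ≤ q * D := ⟨by nlinarith, by nlinarith⟩
      rw [hq] at *
      nlinarith
    -- split the optimal sum
    rw [hΩsum]
    have hsplit : ∑ v ∈ Ω, x v = ∑ v ∈ Ω ∩ Ωh, x v + ∑ v ∈ Ω \ Ωh, x v :=
      (Finset.sum_inter_add_sum_sdiff Ω Ωh x).symm
    have hA : ∑ v ∈ Ω ∩ Ωh, x v ≤ W := by
      rw [hW]
      exact Finset.sum_le_sum_of_subset_of_nonneg (Finset.inter_subset_right) (fun v _ _ => hx v)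
    have hB : ∑ v ∈ Ω \ Ωh, x v ≤ (k : ℝ) * x w₀ := by
      have h1 : ∑ v ∈ Ω \ Ωh, x v ≤ ((Ω \ Ωh).card : ℝ) * x w₀ := by
        have := Finset.sum_le_card_nsmul (Ω \ Ωh) x (x w₀) ?_
        · simpa [nsmul_eq_mul] using this
        · intro v hv
          rw [Finset.mem_sdiff] at hv
          have hvQ : v ∉ Q := fun h => hv.2 (hQΩh h)
          exact hQbig w₀ hw₀ v (hΩsub.1 hv.1) hvQ
      have h2 : ((Ω \ Ωh).card : ℝ) ≤ (k : ℝ) := by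
        have : (Ω \ Ωh).card ≤ Ω.card := Finset.card_le_card (Finset.sdiff_subset)
        exact_mod_cast le_trans this hΩcard
      nlinarith
    have hkD' : (k : ℝ) * x w₀ ≤ 2 * (D : ℝ) * W := by
      have h1 : (k : ℝ) ≤ 2 * (q : ℝ) * (D : ℝ) := by exact_mod_cast hk2qD
      have h2 : (k : ℝ) * x w₀ ≤ 2 * (q : ℝ) * (D : ℝ) * x w₀ := by nlinarith
      have hD0 : (0 : ℝ) ≤ 2 * (D : ℝ) := by positivity
      calc (k : ℝ) * x w₀ ≤ 2 * (D : ℝ) * ((q : ℝ) * x w₀) := by nlinarith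
        _ ≤ 2 * (D : ℝ) * W := mul_le_mul_of_nonneg_left hqm hD0
    rw [hsplit]
    have : (2 * (D : ℝ) + 1) * W = W + 2 * (D : ℝ) * W := by ring
    linarith
end

section
/- Let h, w ≥ 1 be integers, let c(i,j) ≥ 0 be weights on {1,…,h} × {1,…,w}, let r be a path in the h × w grid, and let t be an integer with 1 ≤ t ≤ h−1. Define the paths ř(j) = min(r(j), t) and r̂(j) = max(r(j), t+1) for 1 ≤ j ≤ w. Then Δ(ř) + Δ(r̂) ≤ Δ(r) and Φ(ř) + Φ(r̂) ≥ Φ(r). -/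
/-- The (support-)EMD of a path `r : {1,…,w} → {1,…,h}` in the `h × w` grid:
`Δ(r) = ∑_{j=1}^{w-1} |r (j+1) - r j|`. -/
def gridDelta (w : ℕ) (r : ℕ → ℕ) : ℤ :=
  ∑ j ∈ Finset.Icc 1 (w - 1), |(r (j + 1) : ℤ) - (r j : ℤ)|

/-- The head value of a path `r` in the `h × w` grid with weights `c`:
`Φ(r) = ∑_{j=1}^{w} c (r j) j`. -/
def gridPhi (w : ℕ) (c : ℕ → ℕ → ℝ) (r : ℕ → ℕ) : ℝ :=
  ∑ j ∈ Finset.Icc 1 w, c (r j) j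

lemma pt_abs (t a b : ℕ) :
    |((min a t : ℕ) : ℤ) - ((min b t : ℕ) : ℤ)| +
      |((max a (t + 1) : ℕ) : ℤ) - ((max b (t + 1) : ℕ) : ℤ)| ≤
      |(a : ℤ) - (b : ℤ)| := by
  push_cast
  rcases abs_cases ((min a t : ℤ) - (min b t : ℤ)) with ⟨h1, _⟩ | ⟨h1, _⟩ <;>
  rcases abs_cases ((max a (t + 1) : ℤ) - (max b (t + 1) : ℤ)) with ⟨h2, _⟩ | ⟨h2, _⟩ <;>
  rcases abs_cases ((a : ℤ) - (b : ℤ)) with ⟨h3, _⟩ | ⟨h3, _⟩ <;>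
  rw [h1, h2, h3] <;> omega

/-- Let `h, w ≥ 1`, `c ≥ 0` weights on the grid, `r` a path in the `h × w` grid,
and `1 ≤ t ≤ h - 1`.  With `ř j = min (r j) t` and `r̂ j = max (r j) (t+1)`, one has
`Δ(ř) + Δ(r̂) ≤ Δ(r)` and `Φ(ř) + Φ(r̂) ≥ Φ(r)`. -/
theorem stmt11 (h w : ℕ) (hh : 1 ≤ h) (hw : 1 ≤ w)
    (c : ℕ → ℕ → ℝ) (hc : ∀ i j, 0 ≤ c i j)
    (r : ℕ → ℕ) (hr : ∀ j, 1 ≤ j → j ≤ w → 1 ≤ r j ∧ r j ≤ h)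
    (t : ℕ) (ht1 : 1 ≤ t) (ht2 : t ≤ h - 1) :
    gridDelta w (fun j => min (r j) t) + gridDelta w (fun j => max (r j) (t + 1)) ≤
      gridDelta w r ∧
    gridPhi w c r ≤
      gridPhi w c (fun j => min (r j) t) + gridPhi w c (fun j => max (r j) (t + 1)) := by
  constructor
  · unfold gridDelta
    rw [← Finset.sum_add_distrib]
    refine Finset.sum_le_sum fun j _ => ?_
    exact pt_abs t (r (j + 1)) (r j)
  · unfold gridPhi
    rw [← Finset.sum_add_distrib]
    refine Finset.sum_le_sum fun j _ => ?_
    rcases le_or_gt (r j) t with hj | hj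
    · simp only [min_eq_left hj]
      have := hc (max (r j) (t + 1)) j
      linarith
    · simp only [max_eq_left (show t + 1 ≤ r j from hj)]
      have := hc (min (r j) t) j
      linarith
end

section
/- Let h, w ≥ 1 be integers, let c(i,j) ≥ 0 be weights on {1,…,h} × {1,…,w}, let r be a path in the h × w grid, and let d ≥ 1 be an integer. Then there exists a path r' in the h × w grid such that Δ(r') ≤ Δ(r)/d and Φ(r') ≥ Φ(r)/(2d). -/
/-- Let `h, w ≥ 1`, `c ≥ 0` weights on the grid, `r` a path in the `h × w` grid,
and `d ≥ 1` an integer.  Then there is a path `r'` in the `h × w` grid with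
`Δ(r') ≤ Δ(r) / d` and `Φ(r') ≥ Φ(r) / (2d)`. -/
theorem stmt12 (h w : ℕ) (hh : 1 ≤ h) (hw : 1 ≤ w)
    (c : ℕ → ℕ → ℝ) (hc : ∀ i j, 0 ≤ c i j)
    (r : ℕ → ℕ) (hr : ∀ j, 1 ≤ j → j ≤ w → 1 ≤ r j ∧ r j ≤ h)
    (d : ℕ) (hd : 1 ≤ d) :
    ∃ r' : ℕ → ℕ, (∀ j, 1 ≤ j → j ≤ w → 1 ≤ r' j ∧ r' j ≤ h) ∧
      (gridDelta w r' : ℝ) ≤ (gridDelta w r : ℝ) / d ∧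
      gridPhi w c r / (2 * d) ≤ gridPhi w c r' := by
  have hd0 : (0:ℝ) < (d:ℝ) := by exact_mod_cast hd
  have hd0' : (0:ℤ) < (d:ℤ) := by exact_mod_cast hd
  -- the edge weights and cumulative deltas
  set g : ℕ → ℤ := fun j => |(r (j + 1) : ℤ) - (r j : ℤ)| with hg
  set T : ℕ → ℤ := fun j => ∑ i ∈ Finset.Ico 1 j, g i with hTdef
  have hg0 : ∀ j, 0 ≤ g j := fun j => abs_nonneg _
  have hT0 : ∀ j, 0 ≤ T j := fun j => Finset.sum_nonneg fun i _ => hg0 i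
  have hTmono : ∀ p q : ℕ, p ≤ q → T p ≤ T q := by
    intro p q hpq
    apply Finset.sum_le_sum_of_subset_of_nonneg
    · exact Finset.Ico_subset_Ico le_rfl hpq
    · intro i _ _; exact hg0 i
  have hDel : ∀ v : ℕ, 1 ≤ v → gridDelta v r = T v := by
    intro v hv
    have hIc : Finset.Icc 1 (v - 1) = Finset.Ico 1 v := by
      ext x; rw [Finset.mem_Icc, Finset.mem_Ico]; omega
    unfold gridDelta
    rw [hIc]
  clear_value g T
  have hΦ0 : 0 ≤ gridPhi w c r := Finset.sum_nonneg fun j _ => hc _ _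
  have hDelnn : (0:ℝ) ≤ (gridDelta w r : ℝ) / d := by
    apply div_nonneg _ hd0.le
    rw [hDel w hw]
    exact_mod_cast hT0 w
  by_cases hΦ : gridPhi w c r ≤ 0
  · -- trivial case: use a constant path
    refine ⟨fun _ => r 1, ?_, ?_, ?_⟩
    · intro j _ _; exact hr 1 le_rfl hw
    · have : gridDelta w (fun _ => r 1) = 0 := by
        unfold gridDelta; simp
      rw [this]
      simpa using hDelnn
    · have h1 : gridPhi w c r / (2 * d) ≤ 0 := by
        apply div_nonpos_of_nonpos_of_nonneg hΦ
        positivity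
      exact h1.trans (Finset.sum_nonneg fun j _ => hc _ _)
  push_neg at hΦ
  -- block assignment
  set blk : ℕ → ℤ := fun j => if T j = T w then (d:ℤ) - 1 else ((d:ℤ) * T j) / T w with hblk
  have hTle : ∀ j, j ≤ w → T j ≤ T w := fun j hj => hTmono j w hj
  have hblkmem : ∀ j ∈ Finset.Icc 1 w, blk j ∈ Finset.Icc (0:ℤ) ((d:ℤ) - 1) := by
    intro j hj
    rw [Finset.mem_Icc] at hj ⊢
    rw [hblk]
    dsimp only
    split_ifs with hT
    · constructor <;> omega
    · have hlt : T j < T w := lt_of_le_of_ne (hTle j hj.2) hT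
      have hTw : 0 < T w := lt_of_le_of_lt (hT0 j) hlt
      constructor
      · exact Int.ediv_nonneg (mul_nonneg hd0'.le (hT0 j)) hTw.le
      · have : ((d:ℤ) * T j) / T w < (d:ℤ) := by
          rw [Int.ediv_lt_iff_lt_mul hTw]
          exact mul_lt_mul_of_pos_left hlt hd0'
        omega
  -- pigeonhole: some block carries Φ/d mass
  clear_value blk
  have hfiber : ∑ k ∈ Finset.Icc (0:ℤ) ((d:ℤ) - 1),
      ∑ j ∈ (Finset.Icc 1 w).filter (fun j => blk j = k), c (r j) j = gridPhi w c r :=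
    Finset.sum_fiberwise_of_maps_to hblkmem _
  have hcard : (Finset.Icc (0:ℤ) ((d:ℤ) - 1)).card = d := by
    rw [Int.card_Icc]; omega
  have hne : (Finset.Icc (0:ℤ) ((d:ℤ) - 1)).Nonempty := by
    rw [← Finset.card_pos, hcard]; omega
  obtain ⟨k, hk, hkge⟩ : ∃ k ∈ Finset.Icc (0:ℤ) ((d:ℤ) - 1),
      gridPhi w c r / d ≤ ∑ j ∈ (Finset.Icc 1 w).filter (fun j => blk j = k), c (r j) j := by
    apply Finset.exists_le_of_sum_le hne
    rw [hfiber, Finset.sum_const, hcard, nsmul_eq_mul]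
    rw [mul_div_cancel₀ _ (ne_of_gt hd0)]
  set F := (Finset.Icc 1 w).filter (fun j => blk j = k) with hF
  clear_value F
  have hFne : F.Nonempty := by
    rw [Finset.nonempty_iff_ne_empty]
    intro hemp
    rw [hemp, Finset.sum_empty] at hkge
    have : 0 < gridPhi w c r / d := div_pos hΦ hd0
    linarith
  set a := F.min' hFne with ha
  set b := F.max' hFne with hb
  have haF : a ∈ F := F.min'_mem hFne
  have hbF : b ∈ F := F.max'_mem hFne
  have hab : a ≤ b := F.min'_le b hbF
  have haF' : a ∈ (Finset.Icc 1 w).filter (fun j => blk j = k) := hF ▸ haF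
  have hbF' : b ∈ (Finset.Icc 1 w).filter (fun j => blk j = k) := hF ▸ hbF
  have haw : 1 ≤ a ∧ a ≤ w := by
    have := (Finset.mem_filter.mp haF').1; rwa [Finset.mem_Icc] at this
  have hbw : 1 ≤ b ∧ b ≤ w := by
    have := (Finset.mem_filter.mp hbF').1; rwa [Finset.mem_Icc] at this
  have hblka : blk a = k := (Finset.mem_filter.mp haF').2
  have hblkb : blk b = k := (Finset.mem_filter.mp hbF').2
  -- key inequality
  have hkey : (d:ℤ) * (T b - T a) ≤ T w := by
    have hTab : T a ≤ T b := hTmono a b hab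
    have hTbw : T b ≤ T w := hTle b hbw.2
    by_cases hqb : T b = T w
    · by_cases hqa : T a = T w
      · rw [hqa, hqb]; simpa using hT0 w
      · have hlt : T a < T w := lt_of_le_of_ne (hTle a haw.2) hqa
        have hTw : 0 < T w := lt_of_le_of_lt (hT0 a) hlt
        have h1 : blk a = (d:ℤ) - 1 := by rw [hblka, ← hblkb, hblk]; simp [hqb]
        have h2 : ((d:ℤ) * T a) / T w = (d:ℤ) - 1 := by
          rw [hblk] at h1; simpa [hqa] using h1
        have h3 : ((d:ℤ) - 1) * T w ≤ (d:ℤ) * T a := by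
          rw [← Int.le_ediv_iff_mul_le hTw, h2]
        nlinarith
    · have hqa : T a ≠ T w := by
        intro hh'
        exact hqb (le_antisymm hTbw (hh' ▸ hTab))
      have hltb : T b < T w := lt_of_le_of_ne hTbw hqb
      have hTw : 0 < T w := lt_of_le_of_lt (hT0 b) hltb
      have h1 : ((d:ℤ) * T a) / T w = ((d:ℤ) * T b) / T w := by
        have ea : blk a = ((d:ℤ) * T a) / T w := by rw [hblk]; simp [hqa]
        have eb : blk b = ((d:ℤ) * T b) / T w := by rw [hblk]; simp [hqb]
        rw [← ea, ← eb, hblka, hblkb]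
      set m := ((d:ℤ) * T a) / T w with hm
      have h2 : m * T w ≤ (d:ℤ) * T a := by
        rw [← Int.le_ediv_iff_mul_le hTw]
      have h3 : (d:ℤ) * T b < (m + 1) * T w := by
        rw [← Int.ediv_lt_iff_lt_mul hTw, ← h1]
        omega
      nlinarith
  -- the clamped path
  refine ⟨fun j => r (min b (max a j)), ?_, ?_, ?_⟩
  · intro j _ _
    apply hr
    · exact le_min hbw.1 (le_trans haw.1 (le_max_left a j))
    · exact le_trans (min_le_left b _) hbw.2
  · -- delta bound
    have hclamp : ∀ j, a ≤ j → j ≤ b → min b (max a j) = j := by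
      intro j h1 h2; rw [max_eq_right h1, min_eq_right h2]
    have hsub : Finset.Ico a b ⊆ Finset.Icc 1 (w - 1) := by
      intro j hj; rw [Finset.mem_Ico] at hj; rw [Finset.mem_Icc]
      constructor
      · omega
      · have : j < b := hj.2
        omega
    have hzero : ∀ j ∈ Finset.Icc 1 (w - 1), j ∉ Finset.Ico a b →
        |(r (min b (max a (j + 1))) : ℤ) - (r (min b (max a j)) : ℤ)| = 0 := by
      intro j _ hj
      rw [Finset.mem_Ico] at hj
      push_neg at hj
      have heq : min b (max a (j + 1)) = min b (max a j) := by
        rcases Nat.lt_or_ge j a with h1 | h1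
        · rw [max_eq_left (by omega : j + 1 ≤ a), max_eq_left h1.le]
        · have hjb : b ≤ j := hj h1
          rw [max_eq_right h1, max_eq_right (by omega : a ≤ j + 1),
            min_eq_left (by omega : b ≤ j + 1), min_eq_left hjb]
      rw [heq, sub_self, abs_zero]
    have hdel' : gridDelta w (fun j => r (min b (max a j))) = ∑ j ∈ Finset.Ico a b, g j :=
      calc gridDelta w (fun j => r (min b (max a j)))
          = ∑ j ∈ Finset.Icc 1 (w - 1),
              |(r (min b (max a (j + 1))) : ℤ) - (r (min b (max a j)) : ℤ)| := rfl
        _ = ∑ j ∈ Finset.Ico a b,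
              |(r (min b (max a (j + 1))) : ℤ) - (r (min b (max a j)) : ℤ)| :=
            (Finset.sum_subset hsub hzero).symm
        _ = ∑ j ∈ Finset.Ico a b, g j := by
            apply Finset.sum_congr rfl
            intro j hj
            rw [Finset.mem_Ico] at hj
            rw [hclamp j hj.1 hj.2.le, hclamp (j + 1) (by omega) hj.2]
            simp only [hg]
    have hsum : ∑ j ∈ Finset.Ico a b, g j = T b - T a := by
      have h1 := Finset.sum_Ico_consecutive g haw.1 hab
      simp only [hTdef]
      linarith [h1]
    rw [hdel', hsum, hDel w hw, le_div_iff₀ hd0]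
    calc ((T b - T a : ℤ) : ℝ) * d = (((d:ℤ) * (T b - T a) : ℤ) : ℝ) := by push_cast; ring
    _ ≤ ((T w : ℤ) : ℝ) := by exact_mod_cast hkey
  · -- phi bound
    have h1 : gridPhi w c r / (2 * d) ≤ gridPhi w c r / d := by
      apply div_le_div_of_nonneg_left hΦ.le hd0
      linarith
    refine h1.trans (hkge.trans ?_)
    have h2 : ∑ j ∈ F, c (r j) j = ∑ j ∈ F, c (r (min b (max a j))) j := by
      apply Finset.sum_congr rfl
      intro j hj
      rw [max_eq_right (F.min'_le j hj), min_eq_right (F.le_max' j hj)]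
    rw [hF] at h2 ⊢
    rw [h2]
    unfold gridPhi
    apply Finset.sum_le_sum_of_subset_of_nonneg (Finset.filter_subset _ _)
    intro j _ _
    exact hc _ _
end

section
/- Let Ω be a column-s-sparse support in the h × w grid, let B > 0 be a real number, and let d = ⌊EMD[Ω]/B⌋. Then there exists a column-s-sparse support Ω' with EMD[Ω'] ≤ B and Φ[Ω'] ≥ Φ[Ω]/(2(d+1)). -/
/-- `EMD(A, B)` for two finite sets of naturals: the minimum over bijections `π : A → B` of
`∑_{a ∈ A} |a - π a|` (by convention `sInf ∅ = 0` if no bijection exists). -/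
noncomputable def setEMD (A B : Finset ℕ) : ℕ :=
  sInf {t : ℕ | ∃ e : {x // x ∈ A} ≃ {y // y ∈ B},
    t = ∑ a ∈ A.attach, ((a.1 : ℤ) - ((e a).1 : ℤ)).natAbs}

/-- The support of column `j` of `Ω ⊆ {1,…,h} × {1,…,w}`. -/
def colSet (Ω : Finset (ℕ × ℕ)) (j : ℕ) : Finset ℕ :=
  (Ω.filter (fun p => p.2 = j)).image Prod.fst

/-- `Ω` is a column-`s`-sparse support in the `h × w` grid: it lies in the grid and each of its
`w` columns has exactly `s` elements. -/
def colSparse (h w s : ℕ) (Ω : Finset (ℕ × ℕ)) : Prop :=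
  Ω ⊆ Finset.Icc 1 h ×ˢ Finset.Icc 1 w ∧ ∀ j ∈ Finset.Icc 1 w, (colSet Ω j).card = s

/-- `EMD[Ω] = ∑_{j=1}^{w-1} EMD(Ω_j, Ω_{j+1})`. -/
noncomputable def suppEMD (w : ℕ) (Ω : Finset (ℕ × ℕ)) : ℕ :=
  ∑ j ∈ Finset.Icc 1 (w - 1), setEMD (colSet Ω j) (colSet Ω (j + 1))

/-- The head value `Φ[Ω] = ∑_{(i,j) ∈ Ω} c i j`. -/
def headVal (c : ℕ → ℕ → ℝ) (Ω : Finset (ℕ × ℕ)) : ℝ :=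
  ∑ p ∈ Ω, c p.1 p.2

-- AUX

lemma setEMD_self (A : Finset ℕ) : setEMD A A = 0 := by
  apply Nat.sInf_eq_zero.mpr
  left
  exact ⟨Equiv.refl _, by simp⟩

lemma mem_colSet {Ω : Finset (ℕ × ℕ)} {i j : ℕ} : i ∈ colSet Ω j ↔ (i, j) ∈ Ω := by
  simp only [colSet, Finset.mem_image, Finset.mem_filter]
  constructor
  · rintro ⟨p, ⟨hp, h2⟩, h1⟩
    rwa [← h1, ← h2]
  · intro h; exact ⟨(i, j), ⟨h, rfl⟩, rfl⟩

def clampN (a b j : ℕ) : ℕ := min b (max a j)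

def repl (Ω : Finset (ℕ × ℕ)) (w a b : ℕ) : Finset (ℕ × ℕ) :=
  (Finset.Icc 1 w).biUnion (fun j => (colSet Ω (clampN a b j)).image (fun i => (i, j)))

lemma colSet_repl (Ω : Finset (ℕ × ℕ)) (w a b j : ℕ) (hj : j ∈ Finset.Icc 1 w) :
    colSet (repl Ω w a b) j = colSet Ω (clampN a b j) := by
  ext i
  rw [mem_colSet, mem_colSet]
  simp only [repl, Finset.mem_biUnion, Finset.mem_image, Prod.mk.injEq]
  constructor
  · rintro ⟨j', _, i', hi', rfl, rfl⟩
    exact mem_colSet.mp hi'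
  · intro hmem
    exact ⟨j, hj, i, mem_colSet.mpr hmem, rfl, rfl⟩

lemma clampN_mem {a b : ℕ} (ha : 1 ≤ a) (hab : a ≤ b) (hbw : b ≤ w) (j : ℕ) :
    clampN a b j ∈ Finset.Icc 1 w := by
  simp only [Finset.mem_Icc, clampN]; omega

lemma colSparse_repl (h w s : ℕ) (Ω : Finset (ℕ × ℕ)) (hΩ : colSparse h w s Ω)
    (a b : ℕ) (ha : 1 ≤ a) (hab : a ≤ b) (hbw : b ≤ w) :
    colSparse h w s (repl Ω w a b) := by
  constructor
  · intro p hp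
    simp only [repl, Finset.mem_biUnion, Finset.mem_image] at hp
    obtain ⟨j, hj, i, hi, rfl⟩ := hp
    have := hΩ.1 (mem_colSet.mp hi)
    simp only [Finset.mem_product] at this ⊢
    exact ⟨this.1, hj⟩
  · intro j hj
    rw [colSet_repl Ω w a b j hj]
    exact hΩ.2 _ (clampN_mem ha hab hbw j)

lemma clampN_cases {a b : ℕ} (hab : a ≤ b) (j : ℕ) :
    clampN a b j = clampN a b (j + 1) ∨
      (clampN a b j = j ∧ clampN a b (j + 1) = j + 1 ∧ a ≤ j ∧ j + 1 ≤ b) := by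
  simp only [clampN]; omega

lemma suppEMD_repl (Ω : Finset (ℕ × ℕ)) (w a b : ℕ) (ha : 1 ≤ a) (hab : a ≤ b) (hbw : b ≤ w) :
    suppEMD w (repl Ω w a b) ≤
      ∑ j ∈ Finset.Ico a b, setEMD (colSet Ω j) (colSet Ω (j + 1)) := by
  have hw : 1 ≤ w := le_trans ha (le_trans hab hbw)
  unfold suppEMD
  have key : ∀ j ∈ Finset.Icc 1 (w - 1),
      setEMD (colSet (repl Ω w a b) j) (colSet (repl Ω w a b) (j + 1)) ≤
        if j ∈ Finset.Ico a b then setEMD (colSet Ω j) (colSet Ω (j + 1)) else 0 := by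
    intro j hj
    simp only [Finset.mem_Icc] at hj
    rw [colSet_repl Ω w a b j (by simp only [Finset.mem_Icc]; omega),
        colSet_repl Ω w a b (j + 1) (by simp only [Finset.mem_Icc]; omega)]
    rcases clampN_cases hab j with hcl | ⟨h1, h2, h3, h4⟩
    · rw [hcl, setEMD_self]; exact Nat.zero_le _
    · rw [h1, h2, if_pos (Finset.mem_Ico.mpr ⟨h3, by omega⟩)]
  calc ∑ j ∈ Finset.Icc 1 (w - 1),
        setEMD (colSet (repl Ω w a b) j) (colSet (repl Ω w a b) (j + 1))
      ≤ ∑ j ∈ Finset.Icc 1 (w - 1),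
          (if j ∈ Finset.Ico a b then setEMD (colSet Ω j) (colSet Ω (j + 1)) else 0) :=
        Finset.sum_le_sum key
    _ = ∑ j ∈ (Finset.Icc 1 (w - 1)).filter (· ∈ Finset.Ico a b),
          setEMD (colSet Ω j) (colSet Ω (j + 1)) := (Finset.sum_filter _ _).symm
    _ ≤ ∑ j ∈ Finset.Ico a b, setEMD (colSet Ω j) (colSet Ω (j + 1)) := by
        apply Finset.sum_le_sum_of_subset
        intro x hx
        exact (Finset.mem_filter.mp hx).2

lemma headVal_repl (c : ℕ → ℕ → ℝ) (hc : ∀ i j, 0 ≤ c i j) (Ω : Finset (ℕ × ℕ))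
    (w a b : ℕ) (ha : 1 ≤ a) (hab : a ≤ b) (hbw : b ≤ w) :
    ∑ j ∈ Finset.Icc a b, ∑ i ∈ colSet Ω j, c i j ≤ headVal c (repl Ω w a b) := by
  unfold headVal repl
  rw [Finset.sum_biUnion]
  · have heq : ∀ j : ℕ, (∑ p ∈ (colSet Ω (clampN a b j)).image (fun i => (i, j)), c p.1 p.2)
        = ∑ i ∈ colSet Ω (clampN a b j), c i j := by
      intro j
      rw [Finset.sum_image (by intro x _ y _ hxy; exact (Prod.mk.injEq ..).mp hxy |>.1)]
    calc ∑ j ∈ Finset.Icc a b, ∑ i ∈ colSet Ω j, c i j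
        = ∑ j ∈ Finset.Icc a b, ∑ i ∈ colSet Ω (clampN a b j), c i j := by
          apply Finset.sum_congr rfl
          intro j hj
          simp only [Finset.mem_Icc] at hj
          have : clampN a b j = j := by simp only [clampN]; omega
          rw [this]
      _ ≤ ∑ j ∈ Finset.Icc 1 w, ∑ i ∈ colSet Ω (clampN a b j), c i j := by
          apply Finset.sum_le_sum_of_subset_of_nonneg
          · intro x hx; simp only [Finset.mem_Icc] at *; omega
          · intro i _ _; exact Finset.sum_nonneg fun x _ => hc _ _
      _ = ∑ j ∈ Finset.Icc 1 w, ∑ p ∈ (colSet Ω (clampN a b j)).image (fun i => (i, j)),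
            c p.1 p.2 := by
          exact Finset.sum_congr rfl fun j _ => (heq j).symm
  · intro x _ y _ hxy
    simp only [Finset.disjoint_left, Finset.mem_image]
    rintro p ⟨i, _, rfl⟩ ⟨i', _, h⟩
    exact hxy ((Prod.mk.injEq ..).mp h).2.symm
/-- Let `Ω` be a column-`s`-sparse support in the `h × w` grid, `B > 0`, and
`d = ⌊EMD[Ω] / B⌋`.  Then there is a column-`s`-sparse support `Ω'` with `EMD[Ω'] ≤ B` and
`Φ[Ω'] ≥ Φ[Ω] / (2 (d + 1))`. -/
theorem stmt13 (h w s : ℕ) (hs1 : 1 ≤ s) (hsh : s ≤ h) (hw : 1 ≤ w)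
    (c : ℕ → ℕ → ℝ) (hc : ∀ i j, 0 ≤ c i j)
    (Ω : Finset (ℕ × ℕ)) (hΩ : colSparse h w s Ω)
    (B : ℝ) (hB : 0 < B)
    (d : ℕ) (hd : d = ⌊(suppEMD w Ω : ℝ) / B⌋₊) :
    ∃ Ω' : Finset (ℕ × ℕ), colSparse h w s Ω' ∧ (suppEMD w Ω' : ℝ) ≤ B ∧
      headVal c Ω / (2 * (d + 1)) ≤ headVal c Ω' := by
  set t : ℕ → ℕ := fun j => setEMD (colSet Ω j) (colSet Ω (j + 1)) with ht
  set P : ℕ → ℕ := fun j => ∑ k ∈ Finset.Ico 1 j, t k with hP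
  have hΦ0 : 0 ≤ headVal c Ω := Finset.sum_nonneg fun p _ => hc _ _
  rcases eq_or_lt_of_le hΦ0 with hΦ | hΦ
  · -- trivial case Φ = 0
    refine ⟨repl Ω w 1 1, colSparse_repl h w s Ω hΩ 1 1 le_rfl le_rfl hw, ?_, ?_⟩
    · have := suppEMD_repl Ω w 1 1 le_rfl le_rfl hw
      simp only [Finset.Ico_self, Finset.sum_empty, Nat.le_zero] at this
      rw [this]
      simpa using hB.le
    · have h1 : headVal c Ω / (2 * (↑d + 1)) = 0 := by rw [← hΦ]; simp
      rw [h1]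
      exact Finset.sum_nonneg fun p _ => hc _ _
  · -- main case Φ > 0
    -- column weights
    set colW : ℕ → ℝ := fun j => ∑ i ∈ colSet Ω j, c i j with hcolW
    have hΦsum : headVal c Ω = ∑ j ∈ Finset.Icc 1 w, colW j := by
      unfold headVal
      rw [← Finset.sum_fiberwise_of_maps_to (g := fun p : ℕ × ℕ => p.2)
        (fun p hp => (Finset.mem_product.mp (hΩ.1 hp)).2)]
      apply Finset.sum_congr rfl
      intro j _
      rw [hcolW]
      simp only [colSet]
      rw [Finset.sum_image (by
        intro x hx y hy hxy
        have hx2 := (Finset.mem_filter.mp hx).2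
        have hy2 := (Finset.mem_filter.mp hy).2
        exact Prod.ext hxy (hx2.trans hy2.symm))]
      apply Finset.sum_congr rfl
      intro p hp
      rw [(Finset.mem_filter.mp hp).2]
    -- prefix floor function
    set g : ℕ → ℕ := fun j => ⌊(P j : ℝ) / B⌋₊ with hg
    have hPw : P w = suppEMD w Ω := by
      rw [hP, suppEMD]
      apply Finset.sum_congr _ fun _ _ => rfl
      ext x
      simp only [Finset.mem_Ico, Finset.mem_Icc]
      omega
    have hgle : ∀ j ∈ Finset.Icc 1 w, g j ∈ Finset.range (d + 1) := by
      intro j hj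
      simp only [Finset.mem_Icc] at hj
      simp only [Finset.mem_range, Nat.lt_succ_iff, hg, hd, ← hPw]
      apply Nat.floor_le_floor
      gcongr
      exact Nat.cast_le.mpr (Finset.sum_le_sum_of_subset (Finset.Ico_subset_Ico le_rfl hj.2))
    -- averaging
    have hsplit : ∑ j ∈ Finset.Icc 1 w, colW j
        = ∑ v ∈ Finset.range (d + 1), ∑ j ∈ (Finset.Icc 1 w).filter (fun j => g j = v), colW j :=
      (Finset.sum_fiberwise_of_maps_to hgle _).symm
    obtain ⟨v, hv, hvavg⟩ : ∃ v ∈ Finset.range (d + 1),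
        headVal c Ω / (d + 1) ≤ ∑ j ∈ (Finset.Icc 1 w).filter (fun j => g j = v), colW j := by
      apply Finset.exists_le_of_sum_le ⟨0, Finset.mem_range.mpr (Nat.succ_pos d)⟩
      rw [Finset.sum_const, Finset.card_range, ← hsplit, ← hΦsum, nsmul_eq_mul]
      apply le_of_eq
      have hne : ((d : ℝ) + 1) ≠ 0 := by positivity
      push_cast
      field_simp
    set S := (Finset.Icc 1 w).filter (fun j => g j = v) with hS
    have hSne : S.Nonempty := by
      rcases S.eq_empty_or_nonempty with he | hne
      · exfalso
        rw [he, Finset.sum_empty] at hvavg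
        have : 0 < headVal c Ω / (d + 1) := by positivity
        linarith
      · exact hne
    set a := S.min' hSne with hadef
    set b := S.max' hSne with hbdef
    have haS : a ∈ S := S.min'_mem hSne
    have hbS : b ∈ S := S.max'_mem hSne
    have ha1 : 1 ≤ a := (Finset.mem_Icc.mp (Finset.mem_filter.mp haS).1).1
    have hbw : b ≤ w := (Finset.mem_Icc.mp (Finset.mem_filter.mp hbS).1).2
    have hab : a ≤ b := S.min'_le b hbS
    refine ⟨repl Ω w a b, colSparse_repl h w s Ω hΩ a b ha1 hab hbw, ?_, ?_⟩
    · -- EMD bound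
      have hsum : ∑ j ∈ Finset.Ico a b, t j = P b - P a := by
        have := Finset.sum_Ico_consecutive t ha1 hab
        simp only [hP]
        omega
      have hPab : P a ≤ P b :=
        Finset.sum_le_sum_of_subset (Finset.Ico_subset_Ico le_rfl hab)
      have hfa : (v : ℝ) ≤ (P a : ℝ) / B := by
        have : g a = v := (Finset.mem_filter.mp haS).2
        rw [← this, hg]
        exact Nat.floor_le (by positivity)
      have hfb : (P b : ℝ) / B < v + 1 := by
        have hgb : g b = v := (Finset.mem_filter.mp hbS).2
        have := Nat.lt_floor_add_one ((P b : ℝ) / B)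
        rw [show (⌊(P b : ℝ) / B⌋₊) = g b from rfl, hgb] at this
        exact_mod_cast this
      have hPb : (P b : ℝ) < (v + 1) * B := by
        rw [div_lt_iff₀ hB] at hfb
        exact hfb
      have hPa : (v : ℝ) * B ≤ (P a : ℝ) := by
        rw [le_div_iff₀ hB] at hfa
        exact hfa
      calc (suppEMD w (repl Ω w a b) : ℝ)
          ≤ ((∑ j ∈ Finset.Ico a b, t j : ℕ) : ℝ) :=
            Nat.cast_le.mpr (suppEMD_repl Ω w a b ha1 hab hbw)
        _ = (P b : ℝ) - (P a : ℝ) := by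
            rw [hsum, Nat.cast_sub hPab]
        _ ≤ B := by nlinarith
    · -- head value bound
      have hSsub : S ⊆ Finset.Icc a b := fun j hj =>
        Finset.mem_Icc.mpr ⟨S.min'_le j hj, S.le_max' j hj⟩
      calc headVal c Ω / (2 * (↑d + 1))
          ≤ headVal c Ω / (↑d + 1) := by
            apply div_le_div_of_nonneg_left hΦ0 (by positivity)
            nlinarith [Nat.cast_nonneg (α := ℝ) d]
        _ ≤ ∑ j ∈ S, colW j := hvavg
        _ ≤ ∑ j ∈ Finset.Icc a b, colW j := by
            apply Finset.sum_le_sum_of_subset_of_nonneg hSsub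
            intro j _ _
            exact Finset.sum_nonneg fun i _ => hc _ _
        _ ≤ headVal c (repl Ω w a b) := headVal_repl c hc Ω w a b ha1 hab hbw
end

section
/- Assume s ≤ h, let B be a real number with 0 < B ≤ w·h², let δ ∈ (0, 1/4), and let x_min = min{c(i,j) : c(i,j) > 0}. Let OPT = max over column-s-sparse supports Ω with EMD[Ω] ≤ B of Φ[Ω], and assume OPT ≥ x_min. Let 0 ≤ r ≤ l be reals with l − r ≤ δ·x_min/(w·h²). Suppose: (i) Ω_l is a column-s-sparse support maximizing Φ[Ω] − l·EMD[Ω] over all column-s-sparse supports, with EMD[Ω_l] ≤ B; (ii) Ω_r is a column-s-sparse support maximizing Φ[Ω] − r·EMD[Ω] over all column-s-sparse supports, with EMD[Ω_r] ≥ B; (iii) Ω'_r is a column-s-sparse support with EMD[Ω'_r] ≤ B and Φ[Ω'_r] ≥ Φ[Ω_r]/(2(⌊EMD[Ω_r]/B⌋ + 1)). Then max{Φ[Ω'_r], Φ[Ω_l]} ≥ (1/4 − δ)·OPT. -/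
/-- Assume `s ≤ h`, `0 < B ≤ w·h²`, `δ ∈ (0, 1/4)`, and let `xmin` be the
minimum positive weight.  Let `OPT` be the maximum of `Φ[Ω]` over column-`s`-sparse supports
with `EMD[Ω] ≤ B`, with `OPT ≥ xmin`.  Let `0 ≤ r ≤ l` with `l - r ≤ δ·xmin/(w·h²)`.  Suppose
`Ωl` maximizes `Φ - l·EMD` with `EMD[Ωl] ≤ B`, `Ωr` maximizes `Φ - r·EMD` with `EMD[Ωr] ≥ B`,
and `Ω'r` (here `Ωr'`) is column-`s`-sparse with `EMD[Ω'r] ≤ B` and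
`Φ[Ω'r] ≥ Φ[Ωr] / (2(⌊EMD[Ωr]/B⌋ + 1))`.  Then
`max {Φ[Ω'r], Φ[Ωl]} ≥ (1/4 - δ)·OPT`. -/
theorem stmt15 (h w s : ℕ) (hs1 : 1 ≤ s) (hsh : s ≤ h) (hw : 1 ≤ w)
    (c : ℕ → ℕ → ℝ) (hc : ∀ i j, 0 ≤ c i j)
    (B : ℝ) (hB0 : 0 < B) (hB1 : B ≤ (w : ℝ) * (h : ℝ) ^ 2)
    (δ : ℝ) (hδ0 : 0 < δ) (hδ1 : δ < 1 / 4)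
    (xmin : ℝ)
    (hxmin : IsLeast {t : ℝ | ∃ i ∈ Finset.Icc 1 h, ∃ j ∈ Finset.Icc 1 w,
      0 < c i j ∧ t = c i j} xmin)
    (OPT : ℝ)
    (hOPT : IsGreatest {t : ℝ | ∃ Ω : Finset (ℕ × ℕ), colSparse h w s Ω ∧
      (suppEMD w Ω : ℝ) ≤ B ∧ t = headVal c Ω} OPT)
    (hOPTmin : xmin ≤ OPT)
    (l r : ℝ) (hr0 : 0 ≤ r) (hrl : r ≤ l)
    (hlr : l - r ≤ δ * xmin / ((w : ℝ) * (h : ℝ) ^ 2))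
    (Ωl : Finset (ℕ × ℕ)) (hΩl : colSparse h w s Ωl)
    (hΩlmax : ∀ Ω : Finset (ℕ × ℕ), colSparse h w s Ω →
      headVal c Ω - l * (suppEMD w Ω : ℝ) ≤ headVal c Ωl - l * (suppEMD w Ωl : ℝ))
    (hΩlB : (suppEMD w Ωl : ℝ) ≤ B)
    (Ωr : Finset (ℕ × ℕ)) (hΩr : colSparse h w s Ωr)
    (hΩrmax : ∀ Ω : Finset (ℕ × ℕ), colSparse h w s Ω →
      headVal c Ω - r * (suppEMD w Ω : ℝ) ≤ headVal c Ωr - r * (suppEMD w Ωr : ℝ))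
    (hΩrB : B ≤ (suppEMD w Ωr : ℝ))
    (Ωr' : Finset (ℕ × ℕ)) (hΩr' : colSparse h w s Ωr')
    (hΩr'B : (suppEMD w Ωr' : ℝ) ≤ B)
    (hΩr'head : headVal c Ωr /
      (2 * ((⌊(suppEMD w Ωr : ℝ) / B⌋₊ : ℝ) + 1)) ≤ headVal c Ωr') :
    (1 / 4 - δ) * OPT ≤ max (headVal c Ωr') (headVal c Ωl) := by

  -- Setup
  obtain ⟨i, hi, j, hj, hcij, hxeq⟩ := hxmin.1
  have hxpos : 0 < xmin := hxeq ▸ hcij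
  have hOPTpos : 0 < OPT := lt_of_lt_of_le hxpos hOPTmin
  have hWpos : 0 < (w : ℝ) * (h : ℝ) ^ 2 := lt_of_lt_of_le hB0 hB1
  set Er : ℝ := (suppEMD w Ωr : ℝ) with hEr
  set K : ℝ := (⌊Er / B⌋₊ : ℝ) with hK
  have hErB : 0 ≤ Er / B := div_nonneg (le_trans hB0.le hΩrB) hB0.le
  have hKle : K ≤ Er / B := Nat.floor_le hErB
  have hKB : K * B ≤ Er := by
    rw [← div_mul_cancel₀ Er (ne_of_gt hB0)]
    exact mul_le_mul_of_nonneg_right hKle hB0.le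
  have hK1 : (1 : ℝ) ≤ K := by
    have h1 : (1 : ℝ) ≤ Er / B := (one_le_div hB0).2 hΩrB
    have : 1 ≤ ⌊Er / B⌋₊ := Nat.le_floor (by exact_mod_cast h1)
    rw [hK]
    exact_mod_cast this
  obtain ⟨Ωs, hΩs, hΩsB, hOPTeq⟩ := hOPT.1
  have hl0 : 0 ≤ l := le_trans hr0 hrl
  -- key inequality for Ωr
  have hr1 : OPT - r * B + r * Er ≤ headVal c Ωr := by
    have h1 := hΩrmax Ωs hΩs
    have h2 : r * (suppEMD w Ωs : ℝ) ≤ r * B := mul_le_mul_of_nonneg_left hΩsB hr0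
    rw [← hOPTeq] at h1
    linarith
  -- key inequality for Ωl
  have hl1 : OPT - l * B ≤ headVal c Ωl := by
    have h1 := hΩlmax Ωs hΩs
    have h2 : l * (suppEMD w Ωs : ℝ) ≤ l * B := mul_le_mul_of_nonneg_left hΩsB hl0
    have h3 : 0 ≤ l * (suppEMD w Ωl : ℝ) :=
      mul_nonneg hl0 (Nat.cast_nonneg _)
    rw [← hOPTeq] at h1
    linarith
  rcases le_or_gt (OPT / 2) (r * B) with hcase | hcase
  · -- Ωr' is good
    refine le_trans ?_ (le_max_left _ _)
    refine le_trans ?_ hΩr'head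
    have hD : (0 : ℝ) < 2 * (K + 1) := by linarith
    rw [le_div_iff₀ hD]
    nlinarith [mul_nonneg (mul_nonneg hδ0.le hOPTpos.le) (by linarith : (0:ℝ) ≤ K + 1),
      mul_nonneg (sub_nonneg.2 hK1) (by linarith : (0:ℝ) ≤ 2 * (r * B) - OPT)]
  · -- Ωl is good
    refine le_trans ?_ (le_max_right _ _)
    have hlrB : (l - r) * B ≤ δ * xmin := by
      have h1 : (l - r) * B ≤ (δ * xmin / ((w : ℝ) * (h : ℝ) ^ 2)) * ((w : ℝ) * (h : ℝ) ^ 2) :=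
        mul_le_mul hlr hB1 hB0.le (div_nonneg (mul_nonneg hδ0.le hxpos.le) hWpos.le)
      rwa [div_mul_cancel₀ _ (ne_of_gt hWpos)] at h1
    have hδx : δ * xmin ≤ δ * OPT := mul_le_mul_of_nonneg_left hOPTmin hδ0.le
    nlinarith
end
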